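/- arXiv:0710.1392 — 5 statements merged into one kernel-verified Lean document; each statement's English description precedes it below -/
import Mathlib

section
/- Let F₁ and F₂ be subfields of a field F₀ and let F = F₁ ∩ F₂. Let β : Vect(F) → Vect(F₁) ×_{Vect(F₀)} Vect(F₂) be the base-change functor into the 2-fibre product category. Then β is an equivalence of categories if and only if for every positive integer n and every matrix A ∈ GL_n(F₀) there exist matrices A₁ ∈ GL_n(F₁) and A₂ ∈ GL_n(F₂) such that A = A₁A₂. -/
/-!
Statement 0 (Proposition 2.1 of Harbater–Hartmann, "Patching over fields"):
for subfields `F₁, F₂ ≤ F₀` with `F = F₁ ∩ F₂`, the base change functor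
`Vect(F) → Vect(F₁) ×_{Vect(F₀)} Vect(F₂)` is an equivalence of categories
if and only if every `A ∈ GLₙ(F₀)` factors as `A = A₁ A₂` with `Aᵢ ∈ GLₙ(Fᵢ)`.
-/

open TensorProduct CategoryTheory

section TwoGluing

variable (F₁ F₂ F₀ : Type) [Field F₁] [Field F₂] [Field F₀]
  [Algebra F₁ F₀] [Algebra F₂ F₀]

/-- An object of the 2-fibre product category `Vect(F₁) ×_{Vect(F₀)} Vect(F₂)`:
a pair of finite dimensional vector spaces `V₁, V₂` over `F₁, F₂` together with
an `F₀`-linear isomorphism between their base changes to `F₀`. -/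
structure VectGluing where
  V₁ : FGModuleCat F₁
  V₂ : FGModuleCat F₂
  φ : (F₀ ⊗[F₁] V₁) ≃ₗ[F₀] (F₀ ⊗[F₂] V₂)

variable {F₁ F₂ F₀}

/-- A morphism in the 2-fibre product category `Vect(F₁) ×_{Vect(F₀)} Vect(F₂)`:
a pair of linear maps compatible with the gluing isomorphisms. -/
@[ext]
structure VectGluingHom (X Y : VectGluing F₁ F₂ F₀) where
  f₁ : X.V₁ ⟶ Y.V₁
  f₂ : X.V₂ ⟶ Y.V₂
  comm : Y.φ.toLinearMap ∘ₗ LinearMap.baseChange F₀ (f₁.hom.hom : X.V₁ →ₗ[F₁] Y.V₁) =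
    LinearMap.baseChange F₀ (f₂.hom.hom : X.V₂ →ₗ[F₂] Y.V₂) ∘ₗ X.φ.toLinearMap

instance : Category (VectGluing F₁ F₂ F₀) where
  Hom X Y := VectGluingHom X Y
  id X := ⟨𝟙 X.V₁, 𝟙 X.V₂, by
    show X.φ.toLinearMap ∘ₗ LinearMap.baseChange F₀ LinearMap.id =
      LinearMap.baseChange F₀ LinearMap.id ∘ₗ X.φ.toLinearMap
    simp [LinearMap.baseChange_id]⟩
  comp {X Y Z} f g := ⟨f.f₁ ≫ g.f₁, f.f₂ ≫ g.f₂, by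
    show Z.φ.toLinearMap ∘ₗ LinearMap.baseChange F₀
        ((g.f₁.hom.hom : Y.V₁ →ₗ[F₁] Z.V₁) ∘ₗ (f.f₁.hom.hom : X.V₁ →ₗ[F₁] Y.V₁)) =
      LinearMap.baseChange F₀
        ((g.f₂.hom.hom : Y.V₂ →ₗ[F₂] Z.V₂) ∘ₗ (f.f₂.hom.hom : X.V₂ →ₗ[F₂] Y.V₂)) ∘ₗ X.φ.toLinearMap
    rw [LinearMap.baseChange_comp, LinearMap.baseChange_comp, ← LinearMap.comp_assoc, g.comm,
      LinearMap.comp_assoc, f.comm, ← LinearMap.comp_assoc]⟩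
  id_comp f := by apply VectGluingHom.ext <;> simp
  comp_id f := by apply VectGluingHom.ext <;> simp
  assoc f g h := by apply VectGluingHom.ext <;> simp

end TwoGluing

section BaseChangeFunctor

variable {F F₁ F₂ F₀ : Type} [Field F] [Field F₁] [Field F₂] [Field F₀]
  [Algebra F F₁] [Algebra F F₂] [Algebra F F₀] [Algebra F₁ F₀] [Algebra F₂ F₀]
  [IsScalarTower F F₁ F₀] [IsScalarTower F F₂ F₀]

lemma vectBaseChange_comm {V W : Type} [AddCommGroup V] [Module F V]
    [AddCommGroup W] [Module F W] (f : V →ₗ[F] W) :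
    ((AlgebraTensorModule.cancelBaseChange F F₁ F₀ F₀ W).trans
        (AlgebraTensorModule.cancelBaseChange F F₂ F₀ F₀ W).symm).toLinearMap ∘ₗ
      LinearMap.baseChange F₀ (LinearMap.baseChange F₁ f) =
    LinearMap.baseChange F₀ (LinearMap.baseChange F₂ f) ∘ₗ
      ((AlgebraTensorModule.cancelBaseChange F F₁ F₀ F₀ V).trans
        (AlgebraTensorModule.cancelBaseChange F F₂ F₀ F₀ V).symm).toLinearMap := by
  apply LinearMap.ext
  intro x
  induction x using TensorProduct.induction_on with
  | zero => simp
  | tmul a y =>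
    induction y using TensorProduct.induction_on with
    | zero => simp
    | tmul b v =>
      simp [AlgebraTensorModule.cancelBaseChange_tmul,
        AlgebraTensorModule.cancelBaseChange_symm_tmul, LinearMap.baseChange_tmul,
        TensorProduct.smul_tmul']
    | add y z hy hz =>
      simp only [tmul_add, map_add] at hy hz ⊢
      rw [hy, hz]
  | add x y hx hy =>
    simp only [map_add] at hx hy ⊢
    rw [hx, hy]

end BaseChangeFunctor

variable (F F₁ F₂ F₀ : Type) [Field F] [Field F₁] [Field F₂] [Field F₀]
  [Algebra F F₁] [Algebra F F₂] [Algebra F F₀] [Algebra F₁ F₀] [Algebra F₂ F₀]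
  [IsScalarTower F F₁ F₀] [IsScalarTower F F₂ F₀]

/-- The base change functor `Vect(F) → Vect(F₁) ×_{Vect(F₀)} Vect(F₂)`, sending a
finite dimensional `F`-vector space `V` to `(V ⊗_F F₁, V ⊗_F F₂)` together with the
canonical isomorphism `(V ⊗_F F₁) ⊗_{F₁} F₀ ≅ V ⊗_F F₀ ≅ (V ⊗_F F₂) ⊗_{F₂} F₀`. -/
noncomputable def vectBaseChange : FGModuleCat F ⥤ VectGluing F₁ F₂ F₀ where
  obj V :=
    { V₁ := FGModuleCat.of F₁ (F₁ ⊗[F] V)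
      V₂ := FGModuleCat.of F₂ (F₂ ⊗[F] V)
      φ := (AlgebraTensorModule.cancelBaseChange F F₁ F₀ F₀ V).trans
        (AlgebraTensorModule.cancelBaseChange F F₂ F₀ F₀ V).symm }
  map {V W} f :=
    { f₁ := FGModuleCat.ofHom (LinearMap.baseChange F₁ (f.hom.hom : V →ₗ[F] W))
      f₂ := FGModuleCat.ofHom (LinearMap.baseChange F₂ (f.hom.hom : V →ₗ[F] W))
      comm := vectBaseChange_comm (f.hom.hom : V →ₗ[F] W) }
  map_id V := by
    refine VectGluingHom.ext ?_ ?_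
    · apply FGModuleCat.hom_ext
      exact LinearMap.baseChange_id
    · apply FGModuleCat.hom_ext
      exact LinearMap.baseChange_id
  map_comp {U V W} f g := by
    refine VectGluingHom.ext ?_ ?_
    · apply FGModuleCat.hom_ext
      exact LinearMap.baseChange_comp _ _
    · apply FGModuleCat.hom_ext
      exact LinearMap.baseChange_comp _ _

section MainProof

open Algebra.TensorProduct Matrix

/-- Build a linear equivalence from an invertible matrix and bases. -/
noncomputable def matUnitEquiv {K M N ι : Type} [Field K] [AddCommGroup M] [Module K M]
    [AddCommGroup N] [Module K N] [Fintype ι] [DecidableEq ι]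
    (u : (Matrix ι ι K)ˣ) (b : Module.Basis ι K M) (c : Module.Basis ι K N) : M ≃ₗ[K] N :=
  LinearEquiv.ofLinear (Matrix.toLin b c u.val) (Matrix.toLin c b u.inv)
    (by rw [← Matrix.toLin_mul c b c, u.val_inv, Matrix.toLin_one])
    (by rw [← Matrix.toLin_mul b c b, u.inv_val, Matrix.toLin_one])

@[simp]
lemma matUnitEquiv_toLinearMap {K M N ι : Type} [Field K] [AddCommGroup M] [Module K M]
    [AddCommGroup N] [Module K N] [Fintype ι] [DecidableEq ι]
    (u : (Matrix ι ι K)ˣ) (b : Module.Basis ι K M) (c : Module.Basis ι K N) :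
    (matUnitEquiv u b c).toLinearMap = Matrix.toLin b c u.val := rfl

lemma toMatrix_matUnitEquiv {K M N ι : Type} [Field K] [AddCommGroup M] [Module K M]
    [AddCommGroup N] [Module K N] [Fintype ι] [DecidableEq ι]
    (u : (Matrix ι ι K)ˣ) (b : Module.Basis ι K M) (c : Module.Basis ι K N) :
    LinearMap.toMatrix b c (matUnitEquiv u b c).toLinearMap = u.val := by
  rw [matUnitEquiv_toLinearMap, LinearMap.toMatrix_toLin]

variable {F F₁ F₂ F₀ : Type} [Field F] [Field F₁] [Field F₂] [Field F₀]
  [Algebra F F₁] [Algebra F F₂] [Algebra F F₀] [Algebra F₁ F₀] [Algebra F₂ F₀]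
  [IsScalarTower F F₁ F₀] [IsScalarTower F F₂ F₀]

/-- The matrix of the canonical gluing isomorphism is the identity. -/
lemma toMatrix_canIso {V ι : Type} [AddCommGroup V] [Module F V]
    [Fintype ι] [DecidableEq ι] (b : Module.Basis ι F V) :
    LinearMap.toMatrix (basis F₀ (basis F₁ b)) (basis F₀ (basis F₂ b))
      ((TensorProduct.AlgebraTensorModule.cancelBaseChange F F₁ F₀ F₀ V).trans
        (TensorProduct.AlgebraTensorModule.cancelBaseChange F F₂ F₀ F₀ V).symm).toLinearMap
      = 1 := by
  ext i j
  rw [LinearMap.toMatrix_apply]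
  simp [basis_apply, basis_repr_tmul,
    TensorProduct.AlgebraTensorModule.cancelBaseChange_tmul,
    TensorProduct.AlgebraTensorModule.cancelBaseChange_symm_tmul,
    Matrix.one_apply, Module.Basis.repr_self, Finsupp.single_apply, eq_comm]

end MainProof

section MainProof2

open Algebra.TensorProduct Matrix

variable {F₁ F₂ F₀ : Type} [Field F₁] [Field F₂] [Field F₀]
  [Algebra F₁ F₀] [Algebra F₂ F₀]

lemma baseChange_equiv_cancel {M N : Type} [AddCommGroup M] [Module F₁ M]
    [AddCommGroup N] [Module F₁ N] (e : M ≃ₗ[F₁] N) (y : F₀ ⊗[F₁] N) :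
    LinearMap.baseChange F₀ e.toLinearMap (LinearMap.baseChange F₀ e.symm.toLinearMap y) = y := by
  rw [← LinearMap.comp_apply, ← LinearMap.baseChange_comp]
  have : e.toLinearMap ∘ₗ e.symm.toLinearMap = LinearMap.id := by ext x; simp
  rw [this, LinearMap.baseChange_id, LinearMap.id_apply]

lemma baseChange_equiv_cancel' {M N : Type} [AddCommGroup M] [Module F₁ M]
    [AddCommGroup N] [Module F₁ N] (e : M ≃ₗ[F₁] N) (y : F₀ ⊗[F₁] M) :
    LinearMap.baseChange F₀ e.symm.toLinearMap (LinearMap.baseChange F₀ e.toLinearMap y) = y := by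
  rw [← LinearMap.comp_apply, ← LinearMap.baseChange_comp]
  have : e.symm.toLinearMap ∘ₗ e.toLinearMap = LinearMap.id := by ext x; simp
  rw [this, LinearMap.baseChange_id, LinearMap.id_apply]

lemma baseChange_symm_comm {M₁ N₁ M₂ N₂ : Type}
    [AddCommGroup M₁] [Module F₁ M₁] [AddCommGroup N₁] [Module F₁ N₁]
    [AddCommGroup M₂] [Module F₂ M₂] [AddCommGroup N₂] [Module F₂ N₂]
    (φ : F₀ ⊗[F₁] M₁ ≃ₗ[F₀] F₀ ⊗[F₂] M₂) (ψ : F₀ ⊗[F₁] N₁ ≃ₗ[F₀] F₀ ⊗[F₂] N₂)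
    (e₁ : M₁ ≃ₗ[F₁] N₁) (e₂ : M₂ ≃ₗ[F₂] N₂)
    (h : ψ.toLinearMap ∘ₗ LinearMap.baseChange F₀ e₁.toLinearMap =
      LinearMap.baseChange F₀ e₂.toLinearMap ∘ₗ φ.toLinearMap) :
    φ.toLinearMap ∘ₗ LinearMap.baseChange F₀ e₁.symm.toLinearMap =
      LinearMap.baseChange F₀ e₂.symm.toLinearMap ∘ₗ ψ.toLinearMap := by
  apply LinearMap.ext; intro x
  have h1 := LinearMap.congr_fun h (LinearMap.baseChange F₀ e₁.symm.toLinearMap x)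
  simp only [LinearMap.comp_apply] at h1 ⊢
  rw [baseChange_equiv_cancel e₁ x] at h1
  rw [h1]
  exact (baseChange_equiv_cancel' e₂ _).symm

/-- Build an isomorphism in the gluing category from compatible linear equivalences. -/
noncomputable def VectGluing.mkIso {X Y : VectGluing F₁ F₂ F₀}
    (e₁ : (X.V₁ : Type) ≃ₗ[F₁] (Y.V₁ : Type)) (e₂ : (X.V₂ : Type) ≃ₗ[F₂] (Y.V₂ : Type))
    (h : Y.φ.toLinearMap ∘ₗ LinearMap.baseChange F₀ e₁.toLinearMap =
      LinearMap.baseChange F₀ e₂.toLinearMap ∘ₗ X.φ.toLinearMap) : X ≅ Y where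
  hom := ⟨FGModuleCat.ofHom e₁.toLinearMap, FGModuleCat.ofHom e₂.toLinearMap, h⟩
  inv := ⟨FGModuleCat.ofHom e₁.symm.toLinearMap, FGModuleCat.ofHom e₂.symm.toLinearMap, baseChange_symm_comm X.φ Y.φ e₁ e₂ h⟩
  hom_inv_id := by
    refine VectGluingHom.ext ?_ ?_
    · apply FGModuleCat.hom_ext
      show e₁.symm.toLinearMap ∘ₗ e₁.toLinearMap = LinearMap.id
      ext x; simp
    · apply FGModuleCat.hom_ext
      show e₂.symm.toLinearMap ∘ₗ e₂.toLinearMap = LinearMap.id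
      ext x; simp
  inv_hom_id := by
    refine VectGluingHom.ext ?_ ?_
    · apply FGModuleCat.hom_ext
      show e₁.toLinearMap ∘ₗ e₁.symm.toLinearMap = LinearMap.id
      ext x; simp
    · apply FGModuleCat.hom_ext
      show e₂.toLinearMap ∘ₗ e₂.symm.toLinearMap = LinearMap.id
      ext x; simp

end MainProof2

section Main3

open Algebra.TensorProduct Matrix

variable (F F₁ F₂ F₀ : Type) [Field F] [Field F₁] [Field F₂] [Field F₀]
  [Algebra F F₁] [Algebra F F₂] [Algebra F F₀] [Algebra F₁ F₀] [Algebra F₂ F₀]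
  [IsScalarTower F F₁ F₀] [IsScalarTower F F₂ F₀]

lemma vectBaseChange_faithful : (vectBaseChange F F₁ F₂ F₀).Faithful := by
  constructor
  intro V W f g hfg
  have h1 : LinearMap.baseChange F₁ (f.hom.hom : V →ₗ[F] W) = LinearMap.baseChange F₁ (g.hom.hom : V →ₗ[F] W) :=
    congrArg (fun h => h.f₁.hom.hom) hfg
  have bV := Module.finBasis F V
  have bW := Module.finBasis F W
  have h2 := congrArg (LinearMap.toMatrix (basis F₁ bV) (basis F₁ bW)) h1
  rw [LinearMap.toMatrix_baseChange, LinearMap.toMatrix_baseChange] at h2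
  have h3 : LinearMap.toMatrix bV bW (f.hom.hom : V →ₗ[F] W) = LinearMap.toMatrix bV bW (g.hom.hom : V →ₗ[F] W) := by
    ext i j
    refine (algebraMap F F₁).injective ?_
    have := congrFun (congrFun h2 i) j
    simpa [Matrix.map_apply] using this
  exact FGModuleCat.hom_ext ((LinearMap.toMatrix bV bW).injective h3)

lemma vectBaseChange_full
    (hglue : ∀ (x₁ : F₁) (x₂ : F₂), algebraMap F₁ F₀ x₁ = algebraMap F₂ F₀ x₂ →
      ∃ y : F, algebraMap F F₁ y = x₁ ∧ algebraMap F F₂ y = x₂) :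
    (vectBaseChange F F₁ F₂ F₀).Full := by
  constructor
  intro V W f
  have bV := Module.finBasis F V
  have bW := Module.finBasis F W
  set M₁ := LinearMap.toMatrix (basis F₁ bV) (basis F₁ bW)
    (id (α := (F₁ ⊗[F] V) →ₗ[F₁] (F₁ ⊗[F] W)) f.f₁.hom.hom) with hM₁
  set M₂ := LinearMap.toMatrix (basis F₂ bV) (basis F₂ bW)
    (id (α := (F₂ ⊗[F] V) →ₗ[F₂] (F₂ ⊗[F] W)) f.f₂.hom.hom) with hM₂
  have hW := toMatrix_canIso (F₁ := F₁) (F₂ := F₂) (F₀ := F₀) bW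
  have hV := toMatrix_canIso (F₁ := F₁) (F₂ := F₂) (F₀ := F₀) bV
  have hc : ((AlgebraTensorModule.cancelBaseChange F F₁ F₀ F₀ W).trans
        (AlgebraTensorModule.cancelBaseChange F F₂ F₀ F₀ W).symm).toLinearMap ∘ₗ
      LinearMap.baseChange F₀ (id (α := (F₁ ⊗[F] V) →ₗ[F₁] (F₁ ⊗[F] W)) f.f₁.hom.hom) =
    LinearMap.baseChange F₀ (id (α := (F₂ ⊗[F] V) →ₗ[F₂] (F₂ ⊗[F] W)) f.f₂.hom.hom) ∘ₗ
      ((AlgebraTensorModule.cancelBaseChange F F₁ F₀ F₀ V).trans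
        (AlgebraTensorModule.cancelBaseChange F F₂ F₀ F₀ V).symm).toLinearMap := f.comm
  have h := congrArg (LinearMap.toMatrix (basis F₀ (basis F₁ bV)) (basis F₀ (basis F₂ bW))) hc
  rw [LinearMap.toMatrix_comp _ (basis F₀ (basis F₁ bW)) _,
    LinearMap.toMatrix_comp _ (basis F₀ (basis F₂ bV)) _,
    LinearMap.toMatrix_baseChange, LinearMap.toMatrix_baseChange, hW, hV, Matrix.one_mul, Matrix.mul_one,
    ← hM₁, ← hM₂] at h
  have hent : ∀ i j, ∃ y : F, algebraMap F F₁ y = M₁ i j ∧ algebraMap F F₂ y = M₂ i j := by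
    intro i j
    refine hglue _ _ ?_
    have := congrFun (congrFun h i) j
    simpa [Matrix.map_apply] using this
  choose N hN₁ hN₂ using hent
  refine ⟨FGModuleCat.ofHom (Matrix.toLin bV bW (Matrix.of N)), ?_⟩
  refine VectGluingHom.ext ?_ ?_
  · apply FGModuleCat.hom_ext
    show LinearMap.baseChange F₁ (Matrix.toLin bV bW (Matrix.of N)) =
      (id (α := (F₁ ⊗[F] V) →ₗ[F₁] (F₁ ⊗[F] W)) f.f₁.hom.hom)
    refine (LinearMap.toMatrix (basis F₁ bV) (basis F₁ bW)).injective ?_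
    rw [LinearMap.toMatrix_baseChange, LinearMap.toMatrix_toLin, ← hM₁]
    ext i j
    simpa [Matrix.map_apply] using hN₁ i j
  · apply FGModuleCat.hom_ext
    show LinearMap.baseChange F₂ (Matrix.toLin bV bW (Matrix.of N)) =
      (id (α := (F₂ ⊗[F] V) →ₗ[F₂] (F₂ ⊗[F] W)) f.f₂.hom.hom)
    refine (LinearMap.toMatrix (basis F₂ bV) (basis F₂ bW)).injective ?_
    rw [LinearMap.toMatrix_baseChange, LinearMap.toMatrix_toLin, ← hM₂]
    ext i j
    simpa [Matrix.map_apply] using hN₂ i j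

end Main3

section Main4

open Algebra.TensorProduct Matrix

variable (F F₁ F₂ F₀ : Type) [Field F] [Field F₁] [Field F₂] [Field F₀]
  [Algebra F F₁] [Algebra F F₂] [Algebra F F₀] [Algebra F₁ F₀] [Algebra F₂ F₀]
  [IsScalarTower F F₁ F₀] [IsScalarTower F F₂ F₀]

lemma vectBaseChange_essSurj
    (hfact : ∀ (n : ℕ), 0 < n → ∀ A : GL (Fin n) F₀,
      ∃ (A₁ : Matrix (Fin n) (Fin n) F₁) (A₂ : Matrix (Fin n) (Fin n) F₂),
        IsUnit A₁ ∧ IsUnit A₂ ∧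
        (A : Matrix (Fin n) (Fin n) F₀) =
          A₁.map (algebraMap F₁ F₀) * A₂.map (algebraMap F₂ F₀)) :
    (vectBaseChange F F₁ F₂ F₀).EssSurj := by
  constructor
  intro X
  set n := Module.finrank F₁ X.V₁ with hn
  let b₁ : Module.Basis (Fin n) F₁ X.V₁ := Module.finBasis F₁ X.V₁
  have hd2 : Module.finrank F₂ X.V₂ = n := by
    have h1 : Module.finrank F₀ (F₀ ⊗[F₁] (X.V₁ : Type)) = n := Module.finrank_baseChange
    have h2 : Module.finrank F₀ (F₀ ⊗[F₂] (X.V₂ : Type)) = Module.finrank F₂ X.V₂ :=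
      Module.finrank_baseChange
    rw [← h2, ← X.φ.finrank_eq, h1]
  let b₂ : Module.Basis (Fin n) F₂ X.V₂ := Module.finBasisOfFinrankEq F₂ X.V₂ hd2
  set P := LinearMap.toMatrix (basis F₀ b₁) (basis F₀ b₂) X.φ.toLinearMap with hP
  set Q := LinearMap.toMatrix (basis F₀ b₂) (basis F₀ b₁) X.φ.symm.toLinearMap with hQ
  have hc1 : X.φ.toLinearMap ∘ₗ X.φ.symm.toLinearMap = LinearMap.id := by ext x; simp
  have hc2 : X.φ.symm.toLinearMap ∘ₗ X.φ.toLinearMap = LinearMap.id := by ext x; simp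
  have hPQ : P * Q = 1 := by
    rw [hP, hQ, ← LinearMap.toMatrix_comp _ (basis F₀ b₁) _, hc1, LinearMap.toMatrix_id]
  have hQP : Q * P = 1 := by
    rw [hP, hQ, ← LinearMap.toMatrix_comp _ (basis F₀ b₂) _, hc2, LinearMap.toMatrix_id]
  let uP : (Matrix (Fin n) (Fin n) F₀)ˣ := ⟨P, Q, hPQ, hQP⟩
  have key : ∃ (A₁ : Matrix (Fin n) (Fin n) F₁) (A₂ : Matrix (Fin n) (Fin n) F₂),
      IsUnit A₁ ∧ IsUnit A₂ ∧
      ((uP⁻¹ : (Matrix (Fin n) (Fin n) F₀)ˣ) : Matrix (Fin n) (Fin n) F₀) =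
        A₁.map (algebraMap F₁ F₀) * A₂.map (algebraMap F₂ F₀) := by
    rcases Nat.eq_zero_or_pos n with h0 | hpos
    · refine ⟨1, 1, isUnit_one, isUnit_one, ?_⟩
      apply Matrix.ext
      intro i j
      have := i.isLt
      omega
    · exact hfact n hpos uP⁻¹
  obtain ⟨A₁, A₂, hA₁, hA₂, hfacteq⟩ := key
  let u₁ := hA₁.unit
  let u₂ := hA₂.unit
  let V : FGModuleCat F := FGModuleCat.of F (Fin n → F)
  let e₁ : (F₁ ⊗[F] (Fin n → F)) ≃ₗ[F₁] (X.V₁ : Type) :=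
    matUnitEquiv u₁ (basis F₁ (Pi.basisFun F (Fin n))) b₁
  let e₂ : (F₂ ⊗[F] (Fin n → F)) ≃ₗ[F₂] (X.V₂ : Type) :=
    matUnitEquiv u₂⁻¹ (basis F₂ (Pi.basisFun F (Fin n))) b₂
  have hcomm : X.φ.toLinearMap ∘ₗ LinearMap.baseChange F₀ e₁.toLinearMap =
      LinearMap.baseChange F₀ e₂.toLinearMap ∘ₗ
        ((AlgebraTensorModule.cancelBaseChange F F₁ F₀ F₀ (Fin n → F)).trans
          (AlgebraTensorModule.cancelBaseChange F F₂ F₀ F₀ (Fin n → F)).symm).toLinearMap := by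
    have hcan := toMatrix_canIso (F₁ := F₁) (F₂ := F₂) (F₀ := F₀) (Pi.basisFun F (Fin n))
    refine (LinearMap.toMatrix (basis F₀ (basis F₁ (Pi.basisFun F (Fin n))))
      (basis F₀ b₂)).injective ?_
    rw [LinearMap.toMatrix_comp _ (basis F₀ b₁) _,
      LinearMap.toMatrix_comp _ (basis F₀ (basis F₂ (Pi.basisFun F (Fin n)))) _,
      LinearMap.toMatrix_baseChange, LinearMap.toMatrix_baseChange, hcan, Matrix.mul_one,
      toMatrix_matUnitEquiv, toMatrix_matUnitEquiv, ← hP]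
    -- goal : P * (↑u₁).map (algebraMap F₁ F₀) = (↑u₂⁻¹).map (algebraMap F₂ F₀)
    have hu1 : (u₁ : Matrix (Fin n) (Fin n) F₁) = A₁ := hA₁.unit_spec
    have hu2 : (u₂ : Matrix (Fin n) (Fin n) F₂) = A₂ := hA₂.unit_spec
    have h1 : (P * A₁.map (algebraMap F₁ F₀)) * A₂.map (algebraMap F₂ F₀) = 1 := by
      rw [mul_assoc, ← hfacteq]
      exact uP.mul_inv
    have h2 : ((u₂⁻¹ : (Matrix (Fin n) (Fin n) F₂)ˣ) : Matrix (Fin n) (Fin n) F₂).map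
        (algebraMap F₂ F₀) * A₂.map (algebraMap F₂ F₀) = 1 := by
      rw [← hu2]
      rw [← Matrix.map_mul]
      rw [u₂.inv_mul]
      rw [Matrix.map_one _ (map_zero _) (map_one _)]
    rw [hu1]
    calc P * A₁.map (algebraMap F₁ F₀)
        = (P * A₁.map (algebraMap F₁ F₀)) *
          (A₂.map (algebraMap F₂ F₀) *
            ((u₂⁻¹ : (Matrix (Fin n) (Fin n) F₂)ˣ) : Matrix (Fin n) (Fin n) F₂).map
              (algebraMap F₂ F₀)) := by
          rw [mul_eq_one_comm.mp h2, mul_one]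
      _ = ((P * A₁.map (algebraMap F₁ F₀)) * A₂.map (algebraMap F₂ F₀)) *
          ((u₂⁻¹ : (Matrix (Fin n) (Fin n) F₂)ˣ) : Matrix (Fin n) (Fin n) F₂).map
            (algebraMap F₂ F₀) := by simp only [mul_assoc]
      _ = ((u₂⁻¹ : (Matrix (Fin n) (Fin n) F₂)ˣ) : Matrix (Fin n) (Fin n) F₂).map
            (algebraMap F₂ F₀) := by rw [h1, Matrix.one_mul]
  exact ⟨V, ⟨VectGluing.mkIso e₁ e₂ hcomm⟩⟩

end Main4

section Main5

open Algebra.TensorProduct Matrix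

variable (F F₁ F₂ F₀ : Type) [Field F] [Field F₁] [Field F₂] [Field F₀]
  [Algebra F F₁] [Algebra F F₂] [Algebra F F₀] [Algebra F₁ F₀] [Algebra F₂ F₀]
  [IsScalarTower F F₁ F₀] [IsScalarTower F F₂ F₀]

lemma vectBaseChange_factor [inst : (vectBaseChange F F₁ F₂ F₀).EssSurj]
    (n : ℕ) (A : GL (Fin n) F₀) :
    ∃ (A₁ : Matrix (Fin n) (Fin n) F₁) (A₂ : Matrix (Fin n) (Fin n) F₂),
      IsUnit A₁ ∧ IsUnit A₂ ∧
      (A : Matrix (Fin n) (Fin n) F₀) =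
        A₁.map (algebraMap F₁ F₀) * A₂.map (algebraMap F₂ F₀) := by
  classical
  let b₁p := Pi.basisFun F₁ (Fin n)
  let b₂p := Pi.basisFun F₂ (Fin n)
  let X : VectGluing F₁ F₂ F₀ :=
    { V₁ := FGModuleCat.of F₁ (Fin n → F₁)
      V₂ := FGModuleCat.of F₂ (Fin n → F₂)
      φ := matUnitEquiv A⁻¹ (basis F₀ b₁p) (basis F₀ b₂p) }
  let V := (vectBaseChange F F₁ F₂ F₀).objPreimage X
  let i := (vectBaseChange F F₁ F₂ F₀).objObjPreimageIso X
  have h1 : (id (α := (Fin n → F₁) →ₗ[F₁] (F₁ ⊗[F] V)) i.inv.f₁.hom.hom) ∘ₗ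
      (id (α := (F₁ ⊗[F] V) →ₗ[F₁] (Fin n → F₁)) i.hom.f₁.hom.hom) = LinearMap.id :=
    congrArg (fun h => h.f₁.hom.hom) i.hom_inv_id
  have h2 : (id (α := (F₁ ⊗[F] V) →ₗ[F₁] (Fin n → F₁)) i.hom.f₁.hom.hom) ∘ₗ
      (id (α := (Fin n → F₁) →ₗ[F₁] (F₁ ⊗[F] V)) i.inv.f₁.hom.hom) = LinearMap.id :=
    congrArg (fun h => h.f₁.hom.hom) i.inv_hom_id
  have h3 : (id (α := (Fin n → F₂) →ₗ[F₂] (F₂ ⊗[F] V)) i.inv.f₂.hom.hom) ∘ₗ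
      (id (α := (F₂ ⊗[F] V) →ₗ[F₂] (Fin n → F₂)) i.hom.f₂.hom.hom) = LinearMap.id :=
    congrArg (fun h => h.f₂.hom.hom) i.hom_inv_id
  have h4 : (id (α := (F₂ ⊗[F] V) →ₗ[F₂] (Fin n → F₂)) i.hom.f₂.hom.hom) ∘ₗ
      (id (α := (Fin n → F₂) →ₗ[F₂] (F₂ ⊗[F] V)) i.inv.f₂.hom.hom) = LinearMap.id :=
    congrArg (fun h => h.f₂.hom.hom) i.inv_hom_id
  let eq₁ : (F₁ ⊗[F] V) ≃ₗ[F₁] (Fin n → F₁) := LinearEquiv.ofLinear _ _ h2 h1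
  have hdim : Module.finrank F V = n := by
    have h5 := eq₁.finrank_eq
    rw [Module.finrank_baseChange, Module.finrank_fin_fun] at h5
    exact h5
  let b : Module.Basis (Fin n) F V := Module.finBasisOfFinrankEq F V hdim
  set M₁ := LinearMap.toMatrix (basis F₁ b) b₁p
    (id (α := (F₁ ⊗[F] V) →ₗ[F₁] (Fin n → F₁)) i.hom.f₁.hom.hom) with hM₁
  set N₁ := LinearMap.toMatrix b₁p (basis F₁ b)
    (id (α := (Fin n → F₁) →ₗ[F₁] (F₁ ⊗[F] V)) i.inv.f₁.hom.hom) with hN₁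
  set M₂ := LinearMap.toMatrix (basis F₂ b) b₂p
    (id (α := (F₂ ⊗[F] V) →ₗ[F₂] (Fin n → F₂)) i.hom.f₂.hom.hom) with hM₂
  set N₂ := LinearMap.toMatrix b₂p (basis F₂ b)
    (id (α := (Fin n → F₂) →ₗ[F₂] (F₂ ⊗[F] V)) i.inv.f₂.hom.hom) with hN₂
  have hMN₁ : M₁ * N₁ = 1 := by
    rw [hM₁, hN₁, ← LinearMap.toMatrix_comp _ (basis F₁ b) _, h2, LinearMap.toMatrix_id]
  have hNM₁ : N₁ * M₁ = 1 := by
    rw [hM₁, hN₁, ← LinearMap.toMatrix_comp _ b₁p _, h1, LinearMap.toMatrix_id]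
  have hMN₂ : M₂ * N₂ = 1 := by
    rw [hM₂, hN₂, ← LinearMap.toMatrix_comp _ (basis F₂ b) _, h4, LinearMap.toMatrix_id]
  have hNM₂ : N₂ * M₂ = 1 := by
    rw [hM₂, hN₂, ← LinearMap.toMatrix_comp _ b₂p _, h3, LinearMap.toMatrix_id]
  let u₂ : (Matrix (Fin n) (Fin n) F₂)ˣ := ⟨M₂, N₂, hMN₂, hNM₂⟩
  -- the compatibility equation
  have hcan := toMatrix_canIso (F₁ := F₁) (F₂ := F₂) (F₀ := F₀) b
  have hXφ : X.φ = matUnitEquiv A⁻¹ (basis F₀ b₁p) (basis F₀ b₂p) := rfl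
  have hcomm : (matUnitEquiv A⁻¹ (basis F₀ b₁p) (basis F₀ b₂p)).toLinearMap ∘ₗ
      LinearMap.baseChange F₀ (id (α := (F₁ ⊗[F] V) →ₗ[F₁] (Fin n → F₁)) i.hom.f₁.hom.hom) =
    LinearMap.baseChange F₀ (id (α := (F₂ ⊗[F] V) →ₗ[F₂] (Fin n → F₂)) i.hom.f₂.hom.hom) ∘ₗ
      ((AlgebraTensorModule.cancelBaseChange F F₁ F₀ F₀ V).trans
        (AlgebraTensorModule.cancelBaseChange F F₂ F₀ F₀ V).symm).toLinearMap := i.hom.comm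
  have h := congrArg (LinearMap.toMatrix (basis F₀ (basis F₁ b)) (basis F₀ b₂p)) hcomm
  rw [LinearMap.toMatrix_comp _ (basis F₀ b₁p) _,
    LinearMap.toMatrix_comp _ (basis F₀ (basis F₂ b)) _,
    LinearMap.toMatrix_baseChange, LinearMap.toMatrix_baseChange, hcan, Matrix.mul_one,
    toMatrix_matUnitEquiv, ← hM₁, ← hM₂] at h
  -- h : ↑A⁻¹ * M₁.map (algebraMap F₁ F₀) = M₂.map (algebraMap F₂ F₀)
  refine ⟨M₁, ((u₂⁻¹ : (Matrix (Fin n) (Fin n) F₂)ˣ) : Matrix (Fin n) (Fin n) F₂), ?_, ?_, ?_⟩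
  · exact ⟨⟨M₁, N₁, hMN₁, hNM₁⟩, rfl⟩
  · exact (u₂⁻¹).isUnit
  · have hA : (A : Matrix (Fin n) (Fin n) F₀) *
        (((A⁻¹ : GL (Fin n) F₀) : Matrix (Fin n) (Fin n) F₀) * M₁.map (algebraMap F₁ F₀)) =
        M₁.map (algebraMap F₁ F₀) := by
      rw [← mul_assoc, A.mul_inv, Matrix.one_mul]
    calc (A : Matrix (Fin n) (Fin n) F₀)
        = (A : Matrix (Fin n) (Fin n) F₀) *
            (M₂.map (algebraMap F₂ F₀) *
              ((u₂⁻¹ : (Matrix (Fin n) (Fin n) F₂)ˣ) : Matrix (Fin n) (Fin n) F₂).map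
                (algebraMap F₂ F₀)) := by
          rw [← Matrix.map_mul]
          show _ = _ * ((u₂.val * u₂.inv).map (algebraMap F₂ F₀))
          rw [u₂.val_inv, Matrix.map_one _ (map_zero _) (map_one _), mul_one]
      _ = ((A : Matrix (Fin n) (Fin n) F₀) * M₂.map (algebraMap F₂ F₀)) *
            ((u₂⁻¹ : (Matrix (Fin n) (Fin n) F₂)ˣ) : Matrix (Fin n) (Fin n) F₂).map
              (algebraMap F₂ F₀) := by simp only [mul_assoc]
      _ = M₁.map (algebraMap F₁ F₀) *
            ((u₂⁻¹ : (Matrix (Fin n) (Fin n) F₂)ˣ) : Matrix (Fin n) (Fin n) F₂).map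
              (algebraMap F₂ F₀) := by rw [← h, hA]

end Main5

section Main6

open Algebra.TensorProduct Matrix

variable (F F₁ F₂ F₀ : Type) [Field F] [Field F₁] [Field F₂] [Field F₀]
  [Algebra F F₁] [Algebra F F₂] [Algebra F F₀] [Algebra F₁ F₀] [Algebra F₂ F₀]
  [IsScalarTower F F₁ F₀] [IsScalarTower F F₂ F₀]

theorem vectBaseChange_isEquivalence_iff
    (hglue : ∀ (x₁ : F₁) (x₂ : F₂), algebraMap F₁ F₀ x₁ = algebraMap F₂ F₀ x₂ →
      ∃ y : F, algebraMap F F₁ y = x₁ ∧ algebraMap F F₂ y = x₂) :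
    CategoryTheory.Functor.IsEquivalence (vectBaseChange F F₁ F₂ F₀) ↔
      (∀ (n : ℕ), 0 < n → ∀ A : GL (Fin n) F₀,
        ∃ (A₁ : Matrix (Fin n) (Fin n) F₁) (A₂ : Matrix (Fin n) (Fin n) F₂),
          IsUnit A₁ ∧ IsUnit A₂ ∧
          (A : Matrix (Fin n) (Fin n) F₀) =
            A₁.map (algebraMap F₁ F₀) * A₂.map (algebraMap F₂ F₀)) := by
  constructor
  · intro h n hn A
    haveI := h.essSurj
    exact vectBaseChange_factor F F₁ F₂ F₀ n A
  · intro h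
    exact ⟨vectBaseChange_faithful F F₁ F₂ F₀, vectBaseChange_full F F₁ F₂ F₀ hglue,
      vectBaseChange_essSurj F F₁ F₂ F₀ h⟩

end Main6

/-- Let `F₁` and `F₂` be subfields of a field `F₀` and let `F = F₁ ∩ F₂`.
The base change functor `β : Vect(F) → Vect(F₁) ×_{Vect(F₀)} Vect(F₂)` is an equivalence of
categories if and only if for every positive integer `n`, every matrix `A ∈ GLₙ(F₀)` factors
as `A = A₁ A₂` with `A₁ ∈ GLₙ(F₁)` and `A₂ ∈ GLₙ(F₂)`. -/
theorem patching_matrix_factorization_criterion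
    (F₀ : Type) [Field F₀] (F₁ F₂ : Subfield F₀) :
    letI : Algebra ↥(F₁ ⊓ F₂) ↥F₁ :=
      (Subfield.inclusion (inf_le_left : F₁ ⊓ F₂ ≤ F₁)).toAlgebra
    letI : Algebra ↥(F₁ ⊓ F₂) ↥F₂ :=
      (Subfield.inclusion (inf_le_right : F₁ ⊓ F₂ ≤ F₂)).toAlgebra
    letI : IsScalarTower ↥(F₁ ⊓ F₂) ↥F₁ F₀ := IsScalarTower.of_algebraMap_eq (fun x => rfl)
    letI : IsScalarTower ↥(F₁ ⊓ F₂) ↥F₂ F₀ := IsScalarTower.of_algebraMap_eq (fun x => rfl)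
    (Functor.IsEquivalence (vectBaseChange ↥(F₁ ⊓ F₂) ↥F₁ ↥F₂ F₀)) ↔
      (∀ (n : ℕ), 0 < n → ∀ A : GL (Fin n) F₀,
        ∃ (A₁ : Matrix (Fin n) (Fin n) ↥F₁) (A₂ : Matrix (Fin n) (Fin n) ↥F₂),
          IsUnit A₁ ∧ IsUnit A₂ ∧
          (A : Matrix (Fin n) (Fin n) F₀) =
            A₁.map (fun x => (x : F₀)) * A₂.map (fun x => (x : F₀))) := by
  letI : Algebra ↥(F₁ ⊓ F₂) ↥F₁ :=
    (Subfield.inclusion (inf_le_left : F₁ ⊓ F₂ ≤ F₁)).toAlgebra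
  letI : Algebra ↥(F₁ ⊓ F₂) ↥F₂ :=
    (Subfield.inclusion (inf_le_right : F₁ ⊓ F₂ ≤ F₂)).toAlgebra
  letI : IsScalarTower ↥(F₁ ⊓ F₂) ↥F₁ F₀ := IsScalarTower.of_algebraMap_eq (fun x => rfl)
  letI : IsScalarTower ↥(F₁ ⊓ F₂) ↥F₂ F₀ := IsScalarTower.of_algebraMap_eq (fun x => rfl)
  exact vectBaseChange_isEquivalence_iff ↥(F₁ ⊓ F₂) ↥F₁ ↥F₂ F₀
    (fun x₁ x₂ hx => by
      have hx' : (x₁ : F₀) = (x₂ : F₀) := hx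
      exact ⟨⟨(x₁ : F₀), Subfield.mem_inf.mpr ⟨x₁.2, hx' ▸ x₂.2⟩⟩,
        Subtype.ext rfl, Subtype.ext hx'⟩)
end

section
/- Let R̂₀ be a complete discrete valuation ring with uniformizer t, and let R̂₁ ≤ R̂₀ be a t-adically complete subring containing t. Let F₀ and F₁ be the fraction fields of R̂₀ and R̂₁ (with F₁ regarded as a subfield of F₀). Assume that R̂₁/tR̂₁ is a domain whose fraction field equals R̂₀/tR̂₀. Then R₀ := R̂₀ ∩ F₁ ⊆ F₀ is t-adically dense in R̂₀; that is, for every f ∈ R̂₀ and every m ≥ 0 there exists f_m ∈ R₀ with f − f_m ∈ t^m R̂₀. -/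
/-!
Statement 2 (Lemma 3.1(a) of Harbater–Hartmann, "Patching over fields"):
density of `R₀ = R̂₀ ∩ F₁` in `R̂₀`.  Here an element `g` of `R̂₀` lies in
`F₁ = Frac(R̂₁)` precisely when `g = b/c` for some `b, c ∈ R̂₁`, `c ≠ 0`.
-/

/-- Let `R̂₀` be a complete discrete valuation ring with uniformizer `t`,
and `R̂₁ ≤ R̂₀` a `t`-adically complete subring containing `t`, such that
`R̂₁/tR̂₁ → R̂₀/tR̂₀` is injective and every element of the field `R̂₀/tR̂₀` is a fraction
of elements of (the image of) `R̂₁/tR̂₁`.  Then `R̂₀ ∩ F₁` is `t`-adically dense in `R̂₀`: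
for every `f ∈ R̂₀` and `m ≥ 0` there is `g ∈ R̂₀` lying in the fraction field of `R̂₁`
with `f - g ∈ t^m R̂₀`. -/
theorem dense_intersection_with_fraction_field
    (R₀ : Type) [CommRing R₀] [IsDomain R₀] [IsDiscreteValuationRing R₀]
    (t : R₀) (ht : Irreducible t)
    [IsAdicComplete (Ideal.span {t} : Ideal R₀) R₀]
    (R₁ : Subring R₀) (htR₁ : t ∈ R₁)
    [IsAdicComplete (Ideal.span {(⟨t, htR₁⟩ : ↥R₁)} : Ideal ↥R₁) ↥R₁]
    -- `R̂₁/tR̂₁ → R̂₀/tR̂₀` is injective: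
    (hinj : ∀ x : ↥R₁, t ∣ (x : R₀) → (⟨t, htR₁⟩ : ↥R₁) ∣ x)
    -- the fraction field of `R̂₁/tR̂₁` is all of `R̂₀/tR̂₀`:
    (hfrac : ∀ a : R₀, ∃ b c : ↥R₁, ¬ t ∣ (c : R₀) ∧ t ∣ (a * (c : R₀) - (b : R₀))) :
    ∀ (f : R₀) (m : ℕ), ∃ g : R₀,
      (∃ b c : ↥R₁, c ≠ 0 ∧ g * (c : R₀) = (b : R₀)) ∧ t ^ m ∣ (f - g) := by
  intro f m
  induction m with
  | zero =>
    exact ⟨0, ⟨0, 1, one_ne_zero, by simp⟩, by simp⟩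
  | succ m ih =>
    obtain ⟨g, ⟨b, c, hc0, hgc⟩, hdvd⟩ := ih
    obtain ⟨h, hh⟩ := hdvd
    obtain ⟨b', c', hc', hmod⟩ := hfrac h
    have htp : Prime t := ht.prime
    -- c' is a unit in R₀
    have hcu : IsUnit (c' : R₀) := by
      by_contra hu
      apply hc'
      have hmem : (c' : R₀) ∈ IsLocalRing.maximalIdeal R₀ :=
        (IsLocalRing.mem_maximalIdeal _).mpr hu
      rw [(IsDiscreteValuationRing.irreducible_iff_uniformizer t).mp ht,
        Ideal.mem_span_singleton] at hmem
      exact hmem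
    obtain ⟨u, hu⟩ := hcu
    set a : R₀ := (b' : R₀) * (↑u⁻¹ : R₀ˣ) with ha
    have hac : a * (c' : R₀) = (b' : R₀) := by
      rw [ha, ← hu]; rw [mul_assoc, Units.inv_mul, mul_one]
    refine ⟨g + t ^ m * a, ⟨b * c' + (⟨t, htR₁⟩ : ↥R₁) ^ m * b' * c,
      c * c', mul_ne_zero hc0 (fun h0 => hc' (by rw [h0]; exact dvd_zero t)), ?_⟩, ?_⟩
    · push_cast
      have hre : (g + t ^ m * a) * ((c : R₀) * (c' : R₀))
          = g * (c : R₀) * (c' : R₀) + t ^ m * (a * (c' : R₀)) * (c : R₀) := by ring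
      rw [hre, hgc, hac]
    · have : f - (g + t ^ m * a) = t ^ m * (h - a) := by linear_combination hh
      rw [this, pow_succ]
      refine mul_dvd_mul_left _ ?_
      have : t ∣ (h - a) * (c' : R₀) := by
        have : (h - a) * (c' : R₀) = h * (c' : R₀) - (b' : R₀) := by
          rw [sub_mul, hac]
        rw [this]; exact hmod
      exact (htp.dvd_or_dvd this).resolve_right hc'
end

section
/- Let R̂₀ be a complete discrete valuation ring with uniformizer t, and let R̂₁, R̂₂ ≤ R̂₀ be t-adically complete subrings containing t. Let F₀ and F₁ be the fraction fields of R̂₀ and R̂₁, and assume that R̂₁/tR̂₁ is a domain whose fraction field equals R̂₀/tR̂₀. Suppose that for each A ∈ GL_n(R̂₀) satisfying A ≡ I (mod t·Mat_n(R̂₀)) there exist A₁ ∈ GL_n(F₁) and A₂ ∈ GL_n(R̂₂) such that A = A₁A₂. Then for every matrix A ∈ Mat_n(R̂₀) with nonzero determinant there exist A₁ ∈ GL_n(F₁) and A₂ ∈ GL_n(R̂₂) such that A = A₁A₂. -/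
/-!
Statement 3 (Lemma 3.1(b) of Harbater–Hartmann, "Patching over fields"):
reduction of matrix factorization to matrices congruent to the identity.
-/

section

variable (R₀ : Type) [CommRing R₀] [IsDomain R₀]
  (R₁ R₂ : Subring R₀) (n : ℕ)

/-- The factorization property: (the image in `Matₙ(F₀)` of) a matrix `A` over `R̂₀`
factors as `A = A₁ A₂`, where `A₁ ∈ GLₙ(F₁)` (an invertible matrix whose entries are
fractions `b/c` with `b, c ∈ R̂₁`) and `A₂ ∈ GLₙ(R̂₂)`. -/
def FactorsGL (A : Matrix (Fin n) (Fin n) R₀) : Prop :=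
  ∃ A₁ : Matrix (Fin n) (Fin n) (FractionRing R₀),
    IsUnit A₁ ∧
    (∀ i j, ∃ b c : ↥R₁, c ≠ 0 ∧
      A₁ i j * algebraMap R₀ (FractionRing R₀) (c : R₀) =
        algebraMap R₀ (FractionRing R₀) (b : R₀)) ∧
    ∃ A₂ : Matrix (Fin n) (Fin n) ↥R₂,
      IsUnit A₂ ∧
      A.map (algebraMap R₀ (FractionRing R₀)) =
        A₁ * A₂.map (fun x => algebraMap R₀ (FractionRing R₀) (x : R₀))

end

theorem aux_isUnit_of_not_dvd {R : Type} [CommRing R] [IsDomain R] [IsDiscreteValuationRing R]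
    {t x : R} (ht : Irreducible t) (h : ¬ t ∣ x) : IsUnit x := by
  by_contra hx
  apply h
  rw [← Ideal.mem_span_singleton, ← ht.maximalIdeal_eq]
  exact hx

theorem aux_dvd_det_sub {R : Type} [CommRing R] {n : ℕ} (t : R)
    (M N : Matrix (Fin n) (Fin n) R) (h : ∀ i j, t ∣ (M i j - N i j)) :
    t ∣ M.det - N.det := by
  set π := Ideal.Quotient.mk (Ideal.span {t}) with hπ
  have hmap : M.map π = N.map π := by
    ext i j
    simp only [Matrix.map_apply]
    rw [Ideal.Quotient.mk_eq_mk_iff_sub_mem]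
    exact Ideal.mem_span_singleton.mpr (h i j)
  have h2 : π M.det = π N.det := by
    rw [RingHom.map_det, RingHom.map_det]; exact congrArg Matrix.det hmap
  rw [← Ideal.mem_span_singleton]
  exact (Ideal.Quotient.mk_eq_mk_iff_sub_mem _ _).mp h2

theorem aux_map_smul {R S : Type} [CommRing R] [CommRing S] (f : R →+* S) {n : ℕ}
    (a : R) (M : Matrix (Fin n) (Fin n) R) : (a • M).map f = f a • M.map f := by
  ext i j
  simp [Matrix.map_apply, Matrix.smul_apply, smul_eq_mul, map_mul]


theorem aux_map_det {R S : Type} [CommRing R] [CommRing S] (f : R →+* S) {n : ℕ}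
    (M : Matrix (Fin n) (Fin n) R) : (M.map f).det = f M.det := by
  rw [RingHom.map_det, RingHom.mapMatrix_apply]

theorem aux_map_adjugate {R S : Type} [CommRing R] [CommRing S] (f : R →+* S) {n : ℕ}
    (M : Matrix (Fin n) (Fin n) R) : (M.map f).adjugate = M.adjugate.map f := by
  rw [← RingHom.mapMatrix_apply, ← RingHom.map_adjugate, RingHom.mapMatrix_apply]

theorem aux_approx {R₀ : Type} [CommRing R₀] [IsDomain R₀] [IsDiscreteValuationRing R₀]
    {t : R₀} (ht : Irreducible t) (R₁ : Subring R₀) (htR₁ : t ∈ R₁)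
    (hfrac : ∀ a : R₀, ∃ b c : ↥R₁, ¬ t ∣ (c : R₀) ∧ t ∣ (a * (c : R₀) - (b : R₀))) :
    ∀ (m : ℕ) (a : R₀), ∃ b c : ↥R₁, ¬ t ∣ (c : R₀) ∧ t ^ m ∣ (a * (c : R₀) - (b : R₀)) := by
  have hprime : Prime t := irreducible_iff_prime.mp ht
  intro m
  induction m with
  | zero =>
    intro a
    refine ⟨0, 1, ?_, ?_⟩
    · simpa using fun hdvd => ht.not_isUnit (isUnit_of_dvd_one hdvd)
    · simp
  | succ m ih =>
    intro a
    obtain ⟨b₀, c₀, hc₀, d, hd⟩ := ih a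
    obtain ⟨b₁, c₁, hc₁, e, he⟩ := hfrac d
    refine ⟨b₀ * c₁ + ⟨t, htR₁⟩ ^ m * b₁, c₀ * c₁, ?_, e, ?_⟩
    · intro hdvd
      push_cast at hdvd
      rcases hprime.dvd_mul.mp hdvd with h | h
      exacts [hc₀ h, hc₁ h]
    · push_cast
      linear_combination (c₁ : R₀) * hd + t ^ m * he

/-- Let `R̂₀` be a complete discrete valuation ring with uniformizer `t`
and let `R̂₁, R̂₂ ≤ R̂₀` be `t`-adically complete subrings containing `t`, such that
`R̂₁/tR̂₁` injects into `R̂₀/tR̂₀` with fraction field all of `R̂₀/tR̂₀`.  If every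
`A ∈ GLₙ(R̂₀)` with `A ≡ I (mod t)` factors as `A = A₁A₂` with `A₁ ∈ GLₙ(F₁)` and
`A₂ ∈ GLₙ(R̂₂)`, then every `A ∈ Matₙ(R̂₀)` with nonzero determinant factors in the
same way. -/
theorem matrix_factorization_reduction
    (R₀ : Type) [CommRing R₀] [IsDomain R₀] [IsDiscreteValuationRing R₀]
    (t : R₀) (ht : Irreducible t)
    [IsAdicComplete (Ideal.span {t} : Ideal R₀) R₀]
    (R₁ : Subring R₀) (htR₁ : t ∈ R₁)
    [IsAdicComplete (Ideal.span {(⟨t, htR₁⟩ : ↥R₁)} : Ideal ↥R₁) ↥R₁]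
    (R₂ : Subring R₀) (htR₂ : t ∈ R₂)
    [IsAdicComplete (Ideal.span {(⟨t, htR₂⟩ : ↥R₂)} : Ideal ↥R₂) ↥R₂]
    -- `R̂₁/tR̂₁ → R̂₀/tR̂₀` is injective:
    (hinj : ∀ x : ↥R₁, t ∣ (x : R₀) → (⟨t, htR₁⟩ : ↥R₁) ∣ x)
    -- the fraction field of `R̂₁/tR̂₁` is all of `R̂₀/tR̂₀`:
    (hfrac : ∀ a : R₀, ∃ b c : ↥R₁, ¬ t ∣ (c : R₀) ∧ t ∣ (a * (c : R₀) - (b : R₀)))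
    (n : ℕ)
    (hhyp : ∀ A : Matrix (Fin n) (Fin n) R₀, IsUnit A →
      (∀ i j, t ∣ (A - 1) i j) → FactorsGL R₀ R₁ R₂ n A) :
    ∀ A : Matrix (Fin n) (Fin n) R₀, A.det ≠ 0 → FactorsGL R₀ R₁ R₂ n A := by
  intro A hA
  classical
  set F := FractionRing R₀ with hF
  set φ : R₀ →+* F := (algebraMap R₀ F : R₀ →+* F) with hφdef
  have hφinj : Function.Injective φ := IsFractionRing.injective R₀ F
  have ht0 : t ≠ 0 := ht.ne_zero
  have hprime : Prime t := UniqueFactorizationMonoid.irreducible_iff_prime.mp ht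
  -- decompose det A
  obtain ⟨k, u, hdetA⟩ := IsDiscreteValuationRing.eq_unit_mul_pow_irreducible hA ht
  set C : Matrix (Fin n) (Fin n) R₀ := ((↑u⁻¹ : R₀) • A.adjugate) with hC
  have hCA : C * A = t ^ k • (1 : Matrix (Fin n) (Fin n) R₀) := by
    rw [hC, Matrix.smul_mul, Matrix.adjugate_mul, hdetA, smul_smul, ← mul_assoc,
      Units.inv_mul, one_mul]
  -- approximate C by a matrix over R₁ with common denominator
  have H : ∀ p : Fin n × Fin n, ∃ b c : ↥R₁, ¬ t ∣ (c : R₀) ∧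
      t ^ (k + 1) ∣ (C p.1 p.2 * (c : R₀) - (b : R₀)) := fun p =>
    aux_approx ht R₁ htR₁ hfrac (k + 1) (C p.1 p.2)
  choose b c hcndvd hdvd using H
  set cden : ↥R₁ := ∏ q : Fin n × Fin n, c q with hcden
  have hcden_ndvd : ¬ t ∣ (cden : R₀) := by
    rw [hcden]
    push_cast
    intro hdvd'
    obtain ⟨q, _, hq⟩ := (hprime.dvd_finset_prod_iff _).mp hdvd'
    exact hcndvd q hq
  set B₁ : Matrix (Fin n) (Fin n) ↥R₁ :=
    Matrix.of (fun i j => b (i, j) * ∏ q ∈ Finset.univ.erase (i, j), c q) with hB₁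
  set B : Matrix (Fin n) (Fin n) R₀ := B₁.map R₁.subtype with hB
  have hBdvd : ∀ i j, t ^ (k + 1) ∣ (C i j * (cden : R₀) - B i j) := by
    intro i j
    obtain ⟨e, he⟩ := hdvd (i, j)
    refine ⟨e * ↑(∏ q ∈ Finset.univ.erase (i, j), c q), ?_⟩
    have hsplit : (cden : R₀) = ↑(c (i, j)) * ↑(∏ q ∈ Finset.univ.erase (i, j), c q) := by
      rw [hcden, ← Finset.mul_prod_erase _ _ (Finset.mem_univ (i, j))]
      push_cast
      ring
    have hBij : B i j = ↑(b (i, j)) * ↑(∏ q ∈ Finset.univ.erase (i, j), c q) := by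
      simp [hB, hB₁, Matrix.map_apply]
    rw [hsplit, hBij]
    linear_combination (↑(∏ q ∈ Finset.univ.erase (i, j), c q) : R₀) * he
  choose E hE using fun i j => hBdvd i j
  set M : Matrix (Fin n) (Fin n) R₀ :=
    (cden : R₀) • (1 : Matrix (Fin n) (Fin n) R₀) - t • (Matrix.of E * A) with hM
  have hBeq : B = (cden : R₀) • C - t ^ (k + 1) • Matrix.of E := by
    ext i j
    have := hE i j
    simp only [Matrix.sub_apply, Matrix.smul_apply, Matrix.of_apply, smul_eq_mul]
    linear_combination -this
  have hBA : B * A = t ^ k • M := by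
    have h1 : B * A = (cden : R₀) • (C * A) - t ^ (k + 1) • (Matrix.of E * A) := by
      rw [hBeq, Matrix.sub_mul, Matrix.smul_mul ((cden : R₀)) C A,
        Matrix.smul_mul (t ^ (k + 1)) (Matrix.of E) A]
    rw [h1, hCA]
    ext i j
    simp only [hM, Matrix.sub_apply, Matrix.smul_apply, smul_eq_mul]
    ring
  have hMdet_ndvd : ¬ t ∣ M.det := by
    have hdiff : t ∣ M.det - ((cden : R₀) • (1 : Matrix (Fin n) (Fin n) R₀)).det := by
      apply aux_dvd_det_sub
      intro i j
      simp only [hM, Matrix.sub_apply, Matrix.smul_apply, smul_eq_mul]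
      exact ⟨-((Matrix.of E * A) i j), by ring⟩
    rw [Matrix.det_smul, Matrix.det_one, mul_one] at hdiff
    intro hMd
    have h2 := dvd_sub hMd hdiff
    rw [sub_sub_cancel] at h2
    exact hcden_ndvd (hprime.dvd_of_dvd_pow h2)
  have hMunit : IsUnit M := (Matrix.isUnit_iff_isUnit_det M).mpr
    (aux_isUnit_of_not_dvd ht hMdet_ndvd)
  obtain ⟨cu, hcu⟩ := aux_isUnit_of_not_dvd ht hcden_ndvd
  have hinv : (↑cu⁻¹ : R₀) * (cden : R₀) = 1 := by rw [← hcu]; exact cu.inv_mul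
  set U : Matrix (Fin n) (Fin n) R₀ := (↑cu⁻¹ : R₀) • M with hU
  have hUunit : IsUnit U := by
    rw [Matrix.isUnit_iff_isUnit_det, hU, Matrix.det_smul]
    exact ((cu⁻¹).isUnit.pow _).mul ((Matrix.isUnit_iff_isUnit_det M).mp hMunit)
  have hUcong : ∀ i j, t ∣ (U - 1) i j := by
    intro i j
    refine ⟨-((↑cu⁻¹ : R₀) * (Matrix.of E * A) i j), ?_⟩
    simp only [hU, hM, Matrix.sub_apply, Matrix.smul_apply, smul_eq_mul]
    linear_combination ((1 : Matrix (Fin n) (Fin n) R₀) i j) * hinv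
  obtain ⟨V₁, hV₁u, hV₁S, V₂, hV₂u, hVeq⟩ := hhyp U hUunit hUcong
  have hMU : M = (cden : R₀) • U := by
    have h3 : (cden : R₀) * (↑cu⁻¹ : R₀) = 1 := by rw [mul_comm]; exact hinv
    rw [hU, smul_smul, h3, one_smul]
  -- pass to the fraction field
  have hmap1 : B.map (algebraMap R₀ (FractionRing R₀)) * A.map (algebraMap R₀ (FractionRing R₀))
      = (algebraMap R₀ (FractionRing R₀) (t ^ k)) • (M.map (algebraMap R₀ (FractionRing R₀))) := by
    rw [← Matrix.map_mul, hBA, aux_map_smul]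
  have hmap2 : M.map (algebraMap R₀ (FractionRing R₀))
      = (algebraMap R₀ (FractionRing R₀) (cden : R₀)) •
        (V₁ * V₂.map (fun x : ↥R₂ => algebraMap R₀ (FractionRing R₀) (x : R₀))) := by
    rw [hMU, aux_map_smul, hVeq]
  have hsfull : B.map (algebraMap R₀ (FractionRing R₀)) * A.map (algebraMap R₀ (FractionRing R₀))
      = (algebraMap R₀ (FractionRing R₀) (t ^ k) * algebraMap R₀ (FractionRing R₀) (cden : R₀)) •
        (V₁ * V₂.map (fun x : ↥R₂ => algebraMap R₀ (FractionRing R₀) (x : R₀))) := by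
    rw [hmap1, hmap2, smul_smul]
  have hdetB : B.det ≠ 0 := by
    have h1 : B.det * A.det ≠ 0 := by
      rw [← Matrix.det_mul, hBA, Matrix.det_smul]
      exact mul_ne_zero (pow_ne_zero _ (pow_ne_zero _ ht0))
        (((Matrix.isUnit_iff_isUnit_det M).mp hMunit).ne_zero)
    exact left_ne_zero_of_mul h1
  have hdne : (algebraMap R₀ (FractionRing R₀)) B.det ≠ 0 :=
    (map_ne_zero_iff _ (IsFractionRing.injective R₀ (FractionRing R₀))).mpr hdetB
  have htne : (algebraMap R₀ (FractionRing R₀)) t ≠ 0 :=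
    (map_ne_zero_iff _ (IsFractionRing.injective R₀ (FractionRing R₀))).mpr ht0
  have hcdenne0 : (cden : R₀) ≠ 0 := fun h => hcden_ndvd (h ▸ dvd_zero t)
  have hcdne : (algebraMap R₀ (FractionRing R₀)) (cden : R₀) ≠ 0 :=
    (map_ne_zero_iff _ (IsFractionRing.injective R₀ (FractionRing R₀))).mpr hcdenne0
  set s : FractionRing R₀ :=
    algebraMap R₀ (FractionRing R₀) (t ^ k) * algebraMap R₀ (FractionRing R₀) (cden : R₀) with hs
  have hsne : s ≠ 0 := mul_ne_zero (by rw [map_pow]; exact pow_ne_zero _ htne) hcdne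
  set A₁ : Matrix (Fin n) (Fin n) (FractionRing R₀) :=
    ((algebraMap R₀ (FractionRing R₀) B.det)⁻¹) •
      ((B.map (algebraMap R₀ (FractionRing R₀))).adjugate * (s • V₁)) with hA₁
  have hDA : (B.map (algebraMap R₀ (FractionRing R₀))).adjugate *
      (s • (V₁ * V₂.map (fun x : ↥R₂ => algebraMap R₀ (FractionRing R₀) (x : R₀))))
      = (algebraMap R₀ (FractionRing R₀) B.det) • (A.map (algebraMap R₀ (FractionRing R₀))) := by
    rw [← hsfull, ← Matrix.mul_assoc, Matrix.adjugate_mul, Matrix.smul_mul, Matrix.one_mul,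
      aux_map_det]
  have hprod : A.map (algebraMap R₀ (FractionRing R₀)) =
      A₁ * V₂.map (fun x : ↥R₂ => algebraMap R₀ (FractionRing R₀) (x : R₀)) := by
    rw [hA₁,
      Matrix.smul_mul ((algebraMap R₀ (FractionRing R₀) B.det)⁻¹)
        ((B.map (algebraMap R₀ (FractionRing R₀))).adjugate * (s • V₁))
        (V₂.map (fun x : ↥R₂ => algebraMap R₀ (FractionRing R₀) (x : R₀))),
      Matrix.mul_assoc,
      Matrix.smul_mul s V₁ (V₂.map (fun x : ↥R₂ => algebraMap R₀ (FractionRing R₀) (x : R₀))),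
      hDA, smul_smul, inv_mul_cancel₀ hdne, one_smul]
  have hA₁u : IsUnit A₁ := by
    rw [Matrix.isUnit_iff_isUnit_det, isUnit_iff_ne_zero, hA₁, Matrix.det_smul,
      Matrix.det_mul, Matrix.det_adjugate, Matrix.det_smul,
      aux_map_det (algebraMap R₀ (FractionRing R₀)) B]
    refine mul_ne_zero (pow_ne_zero _ (inv_ne_zero hdne)) (mul_ne_zero
      (pow_ne_zero _ hdne) (mul_ne_zero (pow_ne_zero _ hsne) ?_))
    exact isUnit_iff_ne_zero.mp ((Matrix.isUnit_iff_isUnit_det V₁).mp hV₁u)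
  -- the subring of fractions over R₁
  set S : Subring (FractionRing R₀) :=
  { carrier := {x | ∃ bb cc : ↥R₁, cc ≠ 0 ∧
      x * algebraMap R₀ (FractionRing R₀) (cc : R₀) = algebraMap R₀ (FractionRing R₀) (bb : R₀)}
    zero_mem' := ⟨0, 1, one_ne_zero, by simp⟩
    one_mem' := ⟨1, 1, one_ne_zero, by simp⟩
    add_mem' := by
      rintro x y ⟨bx, cx, hcx, hx⟩ ⟨by', cy, hcy, hy⟩
      refine ⟨bx * cy + by' * cx, cx * cy, mul_ne_zero hcx hcy, ?_⟩
      simp only [Subring.coe_add, Subring.coe_mul, map_add, map_mul]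
      linear_combination (algebraMap R₀ (FractionRing R₀) (cy : R₀)) * hx +
        (algebraMap R₀ (FractionRing R₀) (cx : R₀)) * hy
    mul_mem' := by
      rintro x y ⟨bx, cx, hcx, hx⟩ ⟨by', cy, hcy, hy⟩
      refine ⟨bx * by', cx * cy, mul_ne_zero hcx hcy, ?_⟩
      simp only [Subring.coe_mul, map_mul]
      linear_combination (y * algebraMap R₀ (FractionRing R₀) (cy : R₀)) * hx +
        (algebraMap R₀ (FractionRing R₀) (bx : R₀)) * hy
    neg_mem' := by
      rintro x ⟨bb, cc, hcc, hx⟩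
      refine ⟨-bb, cc, hcc, ?_⟩
      simp only [Subring.coe_neg, map_neg]
      linear_combination -hx } with hS
  have halgS : ∀ r : ↥R₁, algebraMap R₀ (FractionRing R₀) (r : R₀) ∈ S :=
    fun r => ⟨r, 1, one_ne_zero, by simp⟩
  have hB₁det : (B₁.det : R₀) = B.det := by
    rw [hB, aux_map_det]
    rfl
  have hB₁detne : B₁.det ≠ 0 := by
    intro h
    apply hdetB
    rw [← hB₁det, h]
    rfl
  have hdinvS : (algebraMap R₀ (FractionRing R₀) B.det)⁻¹ ∈ S := by
    refine ⟨1, B₁.det, hB₁detne, ?_⟩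
    rw [hB₁det]
    rw [inv_mul_cancel₀ hdne]
    simp
  have hsS : s ∈ S := by
    rw [hs]
    refine S.mul_mem ?_ (halgS cden)
    rw [map_pow]
    exact S.pow_mem (halgS ⟨t, htR₁⟩) k
  have hadjS : ∀ i j, (B.map (algebraMap R₀ (FractionRing R₀))).adjugate i j ∈ S := by
    intro i j
    rw [aux_map_adjugate]
    have : B.adjugate = (B₁.adjugate).map R₁.subtype := by
      rw [hB, ← RingHom.mapMatrix_apply, ← RingHom.mapMatrix_apply, RingHom.map_adjugate]
    rw [this]
    exact halgS (B₁.adjugate i j)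
  have hA₁S : ∀ i j, A₁ i j ∈ S := by
    intro i j
    have hentry : A₁ i j = (algebraMap R₀ (FractionRing R₀) B.det)⁻¹ *
        ∑ l, (B.map (algebraMap R₀ (FractionRing R₀))).adjugate i l * (s * V₁ l j) := by
      rw [hA₁]
      simp only [Matrix.smul_apply, Matrix.mul_apply, smul_eq_mul]
    rw [hentry]
    refine S.mul_mem hdinvS (S.sum_mem fun l _ => S.mul_mem (hadjS i l)
      (S.mul_mem hsS (hV₁S l j)))
  exact ⟨A₁, hA₁u, hA₁S, V₂, hV₂u, hprod⟩
end

section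
/- Let T be a domain and t ∈ T an element generating a prime ideal (t) ⊂ T, and let M ⊆ M₁, M₂ ⊆ M₀ be T-modules with no t-torsion such that: M is t-adically complete; M ∩ tMᵢ = tM and Mᵢ ∩ tM₀ = tMᵢ for i = 1,2; and ⋂_{j=1}^∞ t^j M₀ = (0). Assume that (M₁/tM₁) ∩ (M₂/tM₂) = M/tM inside M₀/tM₀ (where these quotients are embedded in M₀/tM₀ via the maps induced by the inclusions). Then M₁ ∩ M₂ = M, the intersection being taken inside M₀. -/
/-!
Statement 5 (Lemma 3.3 of Harbater–Hartmann, "Patching over fields"): the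
intersection lemma for `t`-adically complete modules.
-/

open Pointwise

private lemma mem_smul_iff {T N : Type*} [CommRing T] [AddCommGroup N] [Module T N]
    (a : T) (S : Submodule T N) (x : N) : x ∈ a • S ↔ ∃ y ∈ S, a • y = x :=
  Set.mem_smul_set

/-- Let `T` be a domain and `t ∈ T` generate a prime ideal.  Let
`M ≤ M₁, M₂ ≤ M₀` be `T`-modules without `t`-torsion such that `M` is `t`-adically
complete, `M ∩ tMᵢ = tM` and `Mᵢ ∩ tM₀ = tMᵢ` (`i = 1,2`), and `⋂_{j≥1} t^j M₀ = 0`.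
If `(M₁/tM₁) ∩ (M₂/tM₂) = M/tM` inside `M₀/tM₀` (equivalently,
`(M₁ + tM₀) ∩ (M₂ + tM₀) = M + tM₀`), then `M₁ ∩ M₂ = M` inside `M₀`. -/
theorem intersection_lemma
    (T : Type) [CommRing T] [IsDomain T] (t : T)
    (hprime : (Ideal.span {t} : Ideal T).IsPrime)
    (M₀ : Type) [AddCommGroup M₀] [Module T M₀]
    (M M₁ M₂ : Submodule T M₀)
    (hM1 : M ≤ M₁) (hM2 : M ≤ M₂)
    (htorsion : ∀ x : M₀, t • x = 0 → x = 0)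
    (hcomplete : IsAdicComplete (Ideal.span {t} : Ideal T) ↥M)
    (h1 : M ⊓ (t • M₁) = t • M) (h2 : M ⊓ (t • M₂) = t • M)
    (h3 : M₁ ⊓ (t • (⊤ : Submodule T M₀)) = t • M₁)
    (h4 : M₂ ⊓ (t • (⊤ : Submodule T M₀)) = t • M₂)
    (hsep : (⨅ j : ℕ, (t ^ (j + 1)) • (⊤ : Submodule T M₀)) = ⊥)
    (hint : (M₁ ⊔ t • (⊤ : Submodule T M₀)) ⊓ (M₂ ⊔ t • (⊤ : Submodule T M₀)) =
      M ⊔ t • (⊤ : Submodule T M₀)) :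
    M₁ ⊓ M₂ = M := by
  refine le_antisymm ?_ (le_inf hM1 hM2)
  intro x hx
  have step : ∀ z : ↥(M₁ ⊓ M₂), ∃ (m : ↥M) (y : ↥(M₁ ⊓ M₂)),
      (z : M₀) = (m : M₀) + t • (y : M₀) := by
    rintro ⟨z, hz⟩
    have hz' : z ∈ M ⊔ t • (⊤ : Submodule T M₀) := by
      rw [← hint]
      exact Submodule.mem_inf.mpr ⟨Submodule.mem_sup_left hz.1, Submodule.mem_sup_left hz.2⟩
    rcases Submodule.mem_sup.mp hz' with ⟨m, hm, w, hw, hmw⟩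
    rcases (mem_smul_iff _ _ _).mp hw with ⟨y₀, -, hy₀⟩
    have hzm : z - m = t • y₀ := by rw [← hmw, hy₀]; abel
    have hin : ∀ (N : Submodule T M₀), z - m ∈ N → N ⊓ (t • (⊤ : Submodule T M₀)) = t • N →
        y₀ ∈ N := by
      intro N hN heq
      have : z - m ∈ t • N := by
        rw [← heq]
        exact Submodule.mem_inf.mpr ⟨hN, by
          exact (mem_smul_iff _ _ _).mpr ⟨y₀, trivial, hzm.symm⟩⟩
      rcases (mem_smul_iff _ _ _).mp this with ⟨y₁, hy₁, hty₁⟩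
      have : t • (y₀ - y₁) = 0 := by rw [smul_sub, hty₁, ← hzm, sub_self]
      have := htorsion _ this
      rw [sub_eq_zero] at this
      exact this ▸ hy₁
    have hy1 : y₀ ∈ M₁ := hin M₁ (Submodule.sub_mem _ hz.1 (hM1 hm)) h3
    have hy2 : y₀ ∈ M₂ := hin M₂ (Submodule.sub_mem _ hz.2 (hM2 hm)) h4
    refine ⟨⟨m, hm⟩, ⟨y₀, Submodule.mem_inf.mpr ⟨hy1, hy2⟩⟩, ?_⟩
    simp only [← hzm]; abel
  choose mf yf hstep using step
  set X : ℕ → ↥(M₁ ⊓ M₂) := fun n => yf^[n] ⟨x, hx⟩ with hXdef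
  have hXsucc : ∀ n, X (n + 1) = yf (X n) := fun n => Function.iterate_succ_apply' yf n _
  have hX : ∀ n, ((X n : M₀)) = (mf (X n) : M₀) + t • (X (n + 1) : M₀) := by
    intro n; rw [hXsucc n]; exact hstep (X n)
  set s : ℕ → ↥M := fun n => ∑ i ∈ Finset.range n, (t ^ i) • mf (X i) with hsdef
  have hscoe : ∀ n, (s n : M₀) = ∑ i ∈ Finset.range n, (t ^ i) • (mf (X i) : M₀) := by
    intro n; simp [hsdef]
  have hs : ∀ n, x = (s n : M₀) + t ^ n • (X n : M₀) := by
    intro n; induction n with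
    | zero => simp [hscoe, hXdef]
    | succ n ih =>
      rw [ih, hX n, hscoe (n + 1), Finset.sum_range_succ, ← hscoe n, smul_add, ← mul_smul,
        ← pow_succ]
      abel
  have hcau : ∀ {m n : ℕ}, m ≤ n →
      s m ≡ s n [SMOD ((Ideal.span {t} : Ideal T) ^ m • ⊤ : Submodule T ↥M)] := by
    intro m n hmn
    rw [SModEq.sub_mem, Ideal.span_singleton_pow, Submodule.ideal_span_singleton_smul]
    have hdiff : s n - s m = ∑ i ∈ Finset.Ico m n, (t ^ i) • mf (X i) := by
      rw [hsdef]; exact (Finset.sum_Ico_eq_sub _ hmn).symm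
    have hmem : s n - s m ∈ (t ^ m) • (⊤ : Submodule T ↥M) := by
      rw [hdiff]
      refine Submodule.sum_mem _ fun i hi => ?_
      rcases Finset.mem_Ico.mp hi with ⟨hmi, -⟩
      refine (mem_smul_iff _ _ _).mpr
        ⟨(t ^ (i - m)) • mf (X i), trivial, ?_⟩
      rw [← mul_smul, ← pow_add, Nat.add_sub_cancel' hmi]
    have := Submodule.neg_mem _ hmem
    rwa [neg_sub] at this
  obtain ⟨L, hL⟩ := hcomplete.toIsPrecomplete.prec hcau
  have key : ∀ n, x - (L : M₀) ∈ (t ^ n) • (⊤ : Submodule T M₀) := by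
    intro n
    have h1' : s n - L ∈ (t ^ n) • (⊤ : Submodule T ↥M) := by
      have := hL n
      rwa [SModEq.sub_mem, Ideal.span_singleton_pow, Submodule.ideal_span_singleton_smul] at this
    rcases (mem_smul_iff _ _ _).mp h1' with ⟨w, -, hw⟩
    have hwcoe : (s n : M₀) - (L : M₀) = t ^ n • (w : M₀) := by
      have := congrArg (Subtype.val) hw
      push_cast at this
      linear_combination (norm := module) this.symm
    refine (mem_smul_iff _ _ _).mpr ⟨(X n : M₀) + w, trivial, ?_⟩
    rw [smul_add, ← hwcoe, hs n]
    abel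
  have hmem : x - (L : M₀) ∈ (⨅ j : ℕ, (t ^ (j + 1)) • (⊤ : Submodule T M₀)) :=
    Submodule.mem_iInf _ |>.mpr fun j => key (j + 1)
  rw [hsep, Submodule.mem_bot, sub_eq_zero] at hmem
  exact hmem ▸ L.2
end

section
/- Let R̂ be a 2-dimensional regular local domain with maximal ideal m and local parameters f, t, such that R̂ is t-adically complete. Let R̂₁ be the m-adic completion of R̂, let R̂₂ be the t-adic completion of R̂[f⁻¹], and let R̂₀ be the t-adic completion of R̂₁[f⁻¹]. Then for every a ∈ R̂₀ there exist b ∈ R̂₁ and c ∈ R̂₂ such that a ≡ b + c (mod tR̂₀). -/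
set_option maxHeartbeats 800000
set_option synthInstance.maxHeartbeats 400000

/-! Setup for the complete local case (Section 5 of Harbater–Hartmann,
"Patching over fields"). -/

open scoped Classical

section AdicDefs

variable (R : Type) [CommRing R] (t : R)

/-- The `t`-adic completion of `R`. -/
noncomputable def tAdicCompletion : Type := AdicCompletion (Ideal.span {t} : Ideal R) R

noncomputable instance : CommRing (tAdicCompletion R t) :=
  inferInstanceAs (CommRing (AdicCompletion (Ideal.span {t} : Ideal R) R))

noncomputable instance : Algebra R (tAdicCompletion R t) :=
  inferInstanceAs (Algebra R (AdicCompletion (Ideal.span {t} : Ideal R) R))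

end AdicDefs

section LocalSetup

variable (R : Type) [CommRing R] [IsDomain R] [IsLocalRing R]

/-- `R̂₁`: the completion of the local ring `R̂` at its maximal ideal. -/
noncomputable def mAdicCompletion : Type := AdicCompletion (IsLocalRing.maximalIdeal R) R

noncomputable instance : CommRing (mAdicCompletion R) :=
  inferInstanceAs (CommRing (AdicCompletion (IsLocalRing.maximalIdeal R) R))

noncomputable instance : Algebra R (mAdicCompletion R) :=
  inferInstanceAs (Algebra R (AdicCompletion (IsLocalRing.maximalIdeal R) R))

variable (f t : R)

/-- `R̂₂`: the `t`-adic completion of `R̂[f⁻¹]`. -/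
noncomputable def Rhat₂ : Type :=
  tAdicCompletion (Localization.Away f) (algebraMap R (Localization.Away f) t)

noncomputable instance : CommRing (Rhat₂ R f t) :=
  inferInstanceAs (CommRing
    (tAdicCompletion (Localization.Away f) (algebraMap R (Localization.Away f) t)))

/-- `R̂₀`: the `t`-adic completion of `R̂₁[f⁻¹]`. -/
noncomputable def Rhat₀ : Type :=
  tAdicCompletion (Localization.Away (algebraMap R (mAdicCompletion R) f))
    (algebraMap (mAdicCompletion R)
      (Localization.Away (algebraMap R (mAdicCompletion R) f))
      (algebraMap R (mAdicCompletion R) t))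

noncomputable instance : CommRing (Rhat₀ R f t) :=
  inferInstanceAs (CommRing
    (tAdicCompletion (Localization.Away (algebraMap R (mAdicCompletion R) f))
      (algebraMap (mAdicCompletion R)
        (Localization.Away (algebraMap R (mAdicCompletion R) f))
        (algebraMap R (mAdicCompletion R) t))))

/-- The canonical ring homomorphism `R̂₁ → R̂₀`. -/
noncomputable def iota₁₀ : mAdicCompletion R →+* Rhat₀ R f t :=
  (algebraMap (Localization.Away (algebraMap R (mAdicCompletion R) f))
      (tAdicCompletion (Localization.Away (algebraMap R (mAdicCompletion R) f))
        (algebraMap (mAdicCompletion R)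
          (Localization.Away (algebraMap R (mAdicCompletion R) f))
          (algebraMap R (mAdicCompletion R) t)))).comp
    (algebraMap (mAdicCompletion R)
      (Localization.Away (algebraMap R (mAdicCompletion R) f)))

/-- The canonical ring homomorphism `R̂ → R̂₂`. -/
noncomputable def rho₂ : R →+* Rhat₂ R f t :=
  (algebraMap (Localization.Away f)
      (tAdicCompletion (Localization.Away f)
        (algebraMap R (Localization.Away f) t))).comp
    (algebraMap R (Localization.Away f))

end LocalSetup


section Fields

variable (R : Type) [CommRing R] [IsDomain R] [IsLocalRing R] (f t : R)
  [IsDomain (Rhat₀ R f t)]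

/-- `F₀`: the fraction field of `R̂₀`. -/
noncomputable def F₀loc : Type := FractionRing (Rhat₀ R f t)

noncomputable instance : Field (F₀loc R f t) :=
  inferInstanceAs (Field (FractionRing (Rhat₀ R f t)))

noncomputable instance : Algebra (Rhat₀ R f t) (F₀loc R f t) :=
  inferInstanceAs (Algebra (Rhat₀ R f t) (FractionRing (Rhat₀ R f t)))

/-- `F = Frac(R̂)`, realized as a subfield of `F₀`. -/
noncomputable def Fsub : Subfield (F₀loc R f t) :=
  Subfield.closure (Set.range ((algebraMap (Rhat₀ R f t) (F₀loc R f t)).comp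
    ((iota₁₀ R f t).comp (algebraMap R (mAdicCompletion R)))))

/-- `F₁ = Frac(R̂₁)`, realized as a subfield of `F₀`. -/
noncomputable def F₁sub : Subfield (F₀loc R f t) :=
  Subfield.closure (Set.range ((algebraMap (Rhat₀ R f t) (F₀loc R f t)).comp (iota₁₀ R f t)))

/-- `F₂ = Frac(R̂₂)`, realized as a subfield of `F₀` via the canonical map `j₂ : R̂₂ → R̂₀`. -/
noncomputable def F₂sub (j₂ : Rhat₂ R f t →+* Rhat₀ R f t) : Subfield (F₀loc R f t) :=
  Subfield.closure (Set.range ((algebraMap (Rhat₀ R f t) (F₀loc R f t)).comp j₂))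

end Fields

section Aux

open AdicCompletion

variable {A : Type} [CommRing A]

lemma aux_smul_top (I : Ideal A) (k : ℕ) : (I ^ k • ⊤ : Submodule A A) = I ^ k := by
  rw [Ideal.smul_eq_mul, Ideal.mul_top]

lemma aux_val_algebraMap (I : Ideal A) (r : A) (n : ℕ) :
    (algebraMap A (AdicCompletion I A) r).val n = Submodule.Quotient.mk r := rfl

lemma aux_decomp (I : Ideal A) (g h : A) (N : ℕ)
    (hD : ∀ k : ℕ, I ^ (N + k) ≤ I ^ k * Ideal.span {g} ⊔ I ^ k * Ideal.span {h})
    (x : AdicCompletion I A) (hx : x.val N = 0) :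
    ∃ b c : AdicCompletion I A,
      x = algebraMap A (AdicCompletion I A) g * b
        + algebraMap A (AdicCompletion I A) h * c := by
  obtain ⟨s, rfl⟩ := AdicCompletion.mk_surjective I A x
  have hdec : ∀ (k : ℕ) (e : A), e ∈ I ^ (N + k) →
      ∃ pq : A × A, pq.1 ∈ I ^ k ∧ pq.2 ∈ I ^ k ∧ e = pq.1 * g + pq.2 * h := by
    intro k e he
    obtain ⟨y, hy, z, hz, hyz⟩ := Submodule.mem_sup.mp (hD k he)
    obtain ⟨p, hp, hpg⟩ := Ideal.mem_mul_span_singleton.mp hy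
    obtain ⟨q, hq, hqh⟩ := Ideal.mem_mul_span_singleton.mp hz
    exact ⟨(p, q), hp, hq, by rw [← hyz, ← hpg, ← hqh]⟩
  have hsN : (s N : A) ∈ I ^ (N + 0) := by
    have h0 : (AdicCompletion.mk I A s).val N = Submodule.Quotient.mk (s N) := rfl
    rw [h0] at hx
    have h1 := (Submodule.Quotient.mk_eq_zero _).mp hx
    rw [aux_smul_top] at h1
    rwa [Nat.add_zero]
  have hδ : ∀ k : ℕ, (s (N + k + 1) : A) - s (N + k) ∈ I ^ (N + k) := by
    intro k
    have h1 := (s.property (Nat.le_succ (N + k)))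
    rw [SModEq.sub_mem, aux_smul_top] at h1
    simpa using (neg_mem h1 : -(s (N + k) - s (N + k + 1)) ∈ _)
  let d : ℕ → A × A := fun k => (hdec k (s (N + k + 1) - s (N + k)) (hδ k)).choose
  let w : ℕ → A × A := fun k =>
    Nat.rec ((hdec 0 (s N) hsN).choose) (fun k wk => wk + d k) k
  have hw0 : w 0 = (hdec 0 (s N) hsN).choose := rfl
  have hwsucc : ∀ k, w (k + 1) = w k + d k := fun _ => rfl
  have hmemd : ∀ k, (d k).1 ∈ I ^ k ∧ (d k).2 ∈ I ^ k := fun k =>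
    ⟨(hdec k _ (hδ k)).choose_spec.1, (hdec k _ (hδ k)).choose_spec.2.1⟩
  have hinv : ∀ k, (w k).1 * g + (w k).2 * h = s (N + k) := by
    intro k
    induction k with
    | zero =>
        have h1 := (hdec 0 (s N) hsN).choose_spec.2.2
        rw [hw0]
        simpa using h1.symm
    | succ k ih =>
        have hd := (hdec k _ (hδ k)).choose_spec.2.2
        show ((w k + d k).1) * g + ((w k + d k).2) * h = s (N + k + 1)
        simp only [Prod.fst_add, Prod.snd_add]
        linear_combination ih - hd
  have hcau1 : ∀ k, (w k).1 ≡ (w (k + 1)).1 [SMOD (I ^ k • ⊤ : Submodule A A)] := by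
    intro k
    rw [SModEq.sub_mem, aux_smul_top, hwsucc k, Prod.fst_add]
    simpa using (neg_mem (hmemd k).1 : -(d k).1 ∈ _)
  have hcau2 : ∀ k, (w k).2 ≡ (w (k + 1)).2 [SMOD (I ^ k • ⊤ : Submodule A A)] := by
    intro k
    rw [SModEq.sub_mem, aux_smul_top, hwsucc k, Prod.snd_add]
    simpa using (neg_mem (hmemd k).2 : -(d k).2 ∈ _)
  refine ⟨AdicCompletion.mk I A (AdicCauchySequence.mk I A (fun k => (w k).1) hcau1),
    AdicCompletion.mk I A (AdicCauchySequence.mk I A (fun k => (w k).2) hcau2), ?_⟩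
  ext n
  have hval : ∀ (u : AdicCauchySequence I A),
      (AdicCompletion.mk I A u).val n = Submodule.Quotient.mk (u n) := fun _ => rfl
  rw [val_add_apply, val_mul, val_mul, aux_val_algebraMap, aux_val_algebraMap, hval, hval, hval]
  have hmk : ∀ a b : A, (Submodule.Quotient.mk (a * b) : A ⧸ (I ^ n • (⊤ : Submodule A A))) =
      Submodule.Quotient.mk a * Submodule.Quotient.mk b := fun a b =>
    map_mul (Ideal.Quotient.mk (I ^ n • ⊤ : Ideal A)) a b
  rw [← hmk, ← hmk, ← Submodule.Quotient.mk_add]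
  rw [Submodule.Quotient.eq]
  have h2 : g * (w n).1 + h * (w n).2 = s (N + n) := by linear_combination hinv n
  show (s n : A) - (g * (w n).1 + h * (w n).2) ∈ I ^ n • ⊤
  rw [h2]
  have h3 := s.property (Nat.le_add_left n N)
  rw [SModEq.sub_mem] at h3
  exact h3

end Aux

/-- Lemma 5.2 of Harbater–Hartmann.  With `R̂` a `t`-adically complete
2-dimensional regular local domain with local parameters `f, t`, and `R̂₁, R̂₂, R̂₀` the
completions described above, every `a ∈ R̂₀` is congruent modulo `tR̂₀` to a sum `b + c`
with `b ∈ R̂₁` and `c ∈ R̂₂`. -/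
theorem local_additive_decomposition
    (R : Type) [CommRing R] [IsDomain R] [IsLocalRing R] [IsNoetherianRing R]
    (f t : R)
    -- `R̂` is a 2-dimensional regular local ring with local parameters `f, t`:
    (hparams : IsLocalRing.maximalIdeal R = Ideal.span {f, t})
    (hdim : ringKrullDim R = 2)
    -- `R̂` is `t`-adically complete:
    [IsAdicComplete (Ideal.span {t} : Ideal R) R]
    -- the canonical homomorphism `R̂₂ → R̂₀` (uniquely determined by compatibility
    -- with the canonical maps from `R̂`):
    (j₂ : Rhat₂ R f t →+* Rhat₀ R f t)
    (hj₂ : ∀ x : R, j₂ (rho₂ R f t x) = iota₁₀ R f t (algebraMap R (mAdicCompletion R) x))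
    (a : Rhat₀ R f t) :
    ∃ (b : mAdicCompletion R) (c : Rhat₂ R f t),
      iota₁₀ R f t (algebraMap R (mAdicCompletion R) t) ∣
        (a - (iota₁₀ R f t b + j₂ c)) := by
  classical
  let f₁ : mAdicCompletion R := algebraMap R (mAdicCompletion R) f
  let t' : Localization.Away f₁ :=
    algebraMap (mAdicCompletion R) (Localization.Away f₁) (algebraMap R (mAdicCompletion R) t)
  let a' : AdicCompletion (Ideal.span {t'} : Ideal (Localization.Away f₁))
      (Localization.Away f₁) := a
  -- Step 1: approximate `a` modulo `t` by an element `a₀` of `R̂₁[f⁻¹]`.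
  obtain ⟨a₀, ha₀⟩ := Submodule.Quotient.mk_surjective _ (a'.val 1)
  let At : AdicCompletion (Ideal.span {t'} : Ideal (Localization.Away f₁))
      (Localization.Away f₁) :=
    algebraMap (Localization.Away f₁)
      (AdicCompletion (Ideal.span {t'} : Ideal (Localization.Away f₁))
        (Localization.Away f₁)) a₀
  have hx₁ : (a' - At).val 1 = 0 := by
    rw [AdicCompletion.val_sub_apply, aux_val_algebraMap, ha₀, sub_self]
  have hD₁ : ∀ k : ℕ, (Ideal.span {t'}) ^ (1 + k) ≤
      (Ideal.span {t'}) ^ k * Ideal.span {t'}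
        ⊔ (Ideal.span {t'}) ^ k * Ideal.span {(0 : Localization.Away f₁)} := by
    intro k
    refine le_trans (le_of_eq ?_) le_sup_left
    rw [add_comm 1 k]
    exact pow_succ (Ideal.span {t'}) k
  obtain ⟨b₀, c₀, hbc₀⟩ := aux_decomp (Ideal.span {t'}) t' (0 : Localization.Away f₁) 1
    hD₁ (a' - At) hx₁
  rw [map_zero, zero_mul, add_zero] at hbc₀
  -- Step 2: write `a₀ = rr / f₁ ^ n`.
  obtain ⟨⟨rr, sden⟩, hsurj⟩ := IsLocalization.surj (M := Submonoid.powers f₁)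
    (S := Localization.Away f₁) a₀
  obtain ⟨n, hn⟩ := (Submonoid.mem_powers_iff (sden : mAdicCompletion R) f₁).mp sden.2
  -- Step 3: decompose `rr ∈ R̂₁` as `r₀ + fⁿ·b₁ + t·c₁` with `r₀ ∈ R̂`.
  let r'' : AdicCompletion (IsLocalRing.maximalIdeal R) R := rr
  obtain ⟨r₀, hr₀⟩ := Submodule.Quotient.mk_surjective _ (r''.val (n + 1))
  have hx₂ : (r'' - algebraMap R (AdicCompletion (IsLocalRing.maximalIdeal R) R) r₀).val
      (n + 1) = 0 := by
    rw [AdicCompletion.val_sub_apply, aux_val_algebraMap, hr₀, sub_self]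
  have hD₂ : ∀ k : ℕ, (IsLocalRing.maximalIdeal R) ^ (n + 1 + k) ≤
      (IsLocalRing.maximalIdeal R) ^ k * Ideal.span {f ^ n}
        ⊔ (IsLocalRing.maximalIdeal R) ^ k * Ideal.span {t} := by
    intro k
    have h2 : (IsLocalRing.maximalIdeal R) ^ (n + 1) ≤ Ideal.span {f ^ n} ⊔ Ideal.span {t} := by
      rw [hparams, Ideal.span_insert]
      have h3 := Ideal.sup_pow_add_le_pow_sup_pow (I := Ideal.span {f}) (J := Ideal.span {t})
        (n := n) (m := 1)
      simpa [Ideal.span_singleton_pow, pow_one] using h3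
    calc (IsLocalRing.maximalIdeal R) ^ (n + 1 + k)
        = (IsLocalRing.maximalIdeal R) ^ k * (IsLocalRing.maximalIdeal R) ^ (n + 1) := by
          rw [← pow_add, add_comm]
      _ ≤ (IsLocalRing.maximalIdeal R) ^ k * (Ideal.span {f ^ n} ⊔ Ideal.span {t}) :=
          Ideal.mul_mono_right h2
      _ = _ := Ideal.mul_sup _ _ _
  obtain ⟨b₁, c₁, hbc₁⟩ := aux_decomp (IsLocalRing.maximalIdeal R) (f ^ n) t (n + 1) hD₂
    (r'' - algebraMap R (AdicCompletion (IsLocalRing.maximalIdeal R) R) r₀) hx₂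
  let b₁' : mAdicCompletion R := b₁
  let c₁' : mAdicCompletion R := c₁
  have hbc₁' : rr - algebraMap R (mAdicCompletion R) r₀
      = algebraMap R (mAdicCompletion R) (f ^ n) * b₁'
        + algebraMap R (mAdicCompletion R) t * c₁' := hbc₁
  -- Step 4: the element `c = r₀ / fⁿ` of `R̂₂`.
  let c₂ : Localization.Away f := IsLocalization.mk' (Localization.Away f) r₀
    (⟨f ^ n, (Submonoid.mem_powers_iff (f ^ n) f).mpr ⟨n, rfl⟩⟩ : Submonoid.powers f)
  let c : Rhat₂ R f t := algebraMap (Localization.Away f)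
    (tAdicCompletion (Localization.Away f) (algebraMap R (Localization.Away f) t)) c₂
  have hc₂ : c₂ * algebraMap R (Localization.Away f) (f ^ n)
      = algebraMap R (Localization.Away f) r₀ := IsLocalization.mk'_spec _ _ _
  have hcR : c * rho₂ R f t (f ^ n) = rho₂ R f t r₀ := by
    have h := congrArg (algebraMap (Localization.Away f)
      (tAdicCompletion (Localization.Away f) (algebraMap R (Localization.Away f) t))) hc₂
    rw [map_mul] at h
    exact h
  -- Now move everything into `R̂₀` and collect the relations.
  let B₁ : AdicCompletion (Ideal.span {t'} : Ideal (Localization.Away f₁))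
      (Localization.Away f₁) := iota₁₀ R f t b₁'
  let C₁ : AdicCompletion (Ideal.span {t'} : Ideal (Localization.Away f₁))
      (Localization.Away f₁) := iota₁₀ R f t c₁'
  let Jc : AdicCompletion (Ideal.span {t'} : Ideal (Localization.Away f₁))
      (Localization.Away f₁) := j₂ c
  let IT : AdicCompletion (Ideal.span {t'} : Ideal (Localization.Away f₁))
      (Localization.Away f₁) := iota₁₀ R f t (algebraMap R (mAdicCompletion R) t)
  let IF : AdicCompletion (Ideal.span {t'} : Ideal (Localization.Away f₁))
      (Localization.Away f₁) := iota₁₀ R f t f₁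
  let Irr : AdicCompletion (Ideal.span {t'} : Ideal (Localization.Away f₁))
      (Localization.Away f₁) := iota₁₀ R f t rr
  let Ir₀ : AdicCompletion (Ideal.span {t'} : Ideal (Localization.Away f₁))
      (Localization.Away f₁) := iota₁₀ R f t (algebraMap R (mAdicCompletion R) r₀)
  have h1' : a' = At + IT * b₀ := sub_eq_iff_eq_add'.mp hbc₀
  have h2C : At * IF ^ n = Irr := by
    have h := congrArg (algebraMap (Localization.Away f₁)
      (AdicCompletion (Ideal.span {t'} : Ideal (Localization.Away f₁))
        (Localization.Away f₁))) hsurj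
    rw [map_mul, ← hn, map_pow, map_pow] at h
    exact h
  have h3C : Irr - Ir₀ = IF ^ n * B₁ + IT * C₁ := by
    have h := congrArg (iota₁₀ R f t) hbc₁'
    rw [map_sub, map_add, map_mul, map_mul, map_pow, map_pow] at h
    exact h
  have h4C : Jc * IF ^ n = Ir₀ := by
    have h := congrArg j₂ hcR
    rw [map_mul] at h
    simp only [hj₂] at h
    rw [map_pow, map_pow] at h
    exact h
  have hu : IsUnit (algebraMap (mAdicCompletion R) (Localization.Away f₁) f₁) :=
    IsLocalization.map_units (S := Localization.Away f₁) ⟨f₁, Submonoid.mem_powers f₁⟩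
  have hu' : IsUnit IF := hu.map (algebraMap (Localization.Away f₁)
    (AdicCompletion (Ideal.span {t'} : Ideal (Localization.Away f₁)) (Localization.Away f₁)))
  obtain ⟨wv, hwv⟩ := (hu'.pow n).exists_right_inv
  have hcan : ∀ y z : AdicCompletion (Ideal.span {t'} : Ideal (Localization.Away f₁))
      (Localization.Away f₁), IF ^ n * y = IF ^ n * z → y = z := by
    intro y z hyz
    calc y = (IF ^ n * wv) * y := by rw [hwv, one_mul]
      _ = wv * (IF ^ n * y) := by ring
      _ = wv * (IF ^ n * z) := by rw [hyz]
      _ = (IF ^ n * wv) * z := by ring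
      _ = z := by rw [hwv, one_mul]
  have key : a' - (B₁ + Jc) = IT * (b₀ + wv * C₁) := by
    apply hcan
    linear_combination (IF ^ n) * h1' + h2C + h3C - h4C - (IT * C₁) * hwv
  exact ⟨b₁', c, b₀ + wv * C₁, key⟩
end
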